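/- arXiv:1807.03050 — 3 statements merged into one kernel-verified Lean document; each statement's English description precedes it below -/
import Mathlib

section
/- Let a, b be integers with 2 ≤ b < a and suppose the polynomial P(X) = X^3 − aX^2 + bX − 1 has three real roots β, β', β'' with β > 1, 0 < β' < 1 and 0 < β'' < 1. Then L_⊕(β) ≥ 1; more precisely, there exist x, y ∈ ℤ_β with x + y ∈ fin(β) but x + y ∉ ℤ_β. -/
open Polynomial

/-- The β-transformation `T_β(x) = βx - ⌊βx⌋`. -/
noncomputable def betaT (β : ℝ) : ℝ → ℝ := fun x => β * x - ⌊β * x⌋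

/-- `fin(β)`: reals `x` such that `|x|/β^N ∈ [0,1)` and the greedy expansion of
`|x|/β^N` is finite, for some `N, n ∈ ℕ`. -/
def finBeta (β : ℝ) : Set ℝ :=
  {x | ∃ N n : ℕ, |x| / β ^ N ∈ Set.Ico (0 : ℝ) 1 ∧ (betaT β)^[n] (|x| / β ^ N) = 0}

/-- `ℤ_β`: the set of β-integers. -/
def betaInt (β : ℝ) : Set ℝ :=
  {x | ∃ N : ℕ, |x| / β ^ N ∈ Set.Ico (0 : ℝ) 1 ∧ (betaT β)^[N] (|x| / β ^ N) = 0}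

/-- `L_⊕(β)`: the least `L ∈ ℕ` such that `β^L·(x+y) ∈ ℤ_β` for all
`x, y ∈ ℤ_β` with `x + y ∈ fin(β)`. -/
noncomputable def Lplus (β : ℝ) : ℕ :=
  sInf {L : ℕ | ∀ x ∈ betaInt β, ∀ y ∈ betaInt β,
    x + y ∈ finBeta β → β ^ L * (x + y) ∈ betaInt β}

/-- `L_⊗(β)`: the least `L ∈ ℕ` such that `β^L·(x·y) ∈ ℤ_β` for all
`x, y ∈ ℤ_β` with `x·y ∈ fin(β)`. -/
noncomputable def Lmul (β : ℝ) : ℕ :=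
  sInf {L : ℕ | ∀ x ∈ betaInt β, ∀ y ∈ betaInt β,
    x * y ∈ finBeta β → β ^ L * (x * y) ∈ betaInt β}


section Aux
open Polynomial Finset

lemma betaT_zero (β : ℝ) : betaT β 0 = 0 := by simp [betaT]

lemma iter_zero (β : ℝ) (k : ℕ) : (betaT β)^[k] 0 = 0 := Function.iterate_fixed (betaT_zero β) k

lemma iter_mem {β : ℝ} {w : ℝ} (hw : w ∈ Set.Ico (0:ℝ) 1) (k : ℕ) :
    (betaT β)^[k] w ∈ Set.Ico (0:ℝ) 1 := by
  induction k with
  | zero => exact hw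
  | succ k ih =>
    rw [Function.iterate_succ_apply']
    exact ⟨by simp only [betaT]; linarith [Int.floor_le (β * (betaT β)^[k] w)],
      by simp only [betaT]; linarith [Int.lt_floor_add_one (β * (betaT β)^[k] w)]⟩

lemma betaT_step {β u v : ℝ} (m : ℤ) (h : β * u = m + v) (h0 : 0 ≤ v) (h1 : v < 1) :
    betaT β u = v := by
  have hf : ⌊β * u⌋ = m := by
    rw [Int.floor_eq_iff]
    refine ⟨by linarith, by linarith⟩
  rw [betaT, hf, h]; ring

set_option maxHeartbeats 1000000 in
lemma expand (β w : ℝ) (k : ℕ) :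
    β^k * w = (∑ i ∈ range k, (⌊β * (betaT β)^[i] w⌋ : ℝ) * β^(k-1-i)) + (betaT β)^[k] w := by
  induction k with
  | zero => simp
  | succ k ih =>
    have h1 : β^(k+1) * w = β * (β^k * w) := by ring
    rw [h1, ih, Function.iterate_succ_apply']
    rw [Finset.sum_range_succ]
    have h2 : ∀ i ∈ range k,
        (⌊β * (betaT β)^[i] w⌋ : ℝ) * β^(k+1-1-i) = β * ((⌊β * (betaT β)^[i] w⌋ : ℝ) * β^(k-1-i)) := by
      intro i hi
      rw [Finset.mem_range] at hi
      have : k+1-1-i = (k-1-i)+1 := by omega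
      rw [this, pow_succ]; ring
    rw [Finset.sum_congr rfl h2, ← Finset.mul_sum]
    have h3 : k+1-1-k = 0 := by omega
    rw [h3, pow_zero]
    simp only [betaT]
    ring

lemma betaInt_rep {β : ℝ} {a : ℤ} (hβ0 : 0 < β) (hβa : β < (a:ℝ)) {x : ℝ}
    (hx : ∃ N : ℕ, |x| / β ^ N ∈ Set.Ico (0 : ℝ) 1 ∧ (betaT β)^[N] (|x| / β ^ N) = 0) :
    ∃ (m : ℕ) (d : ℕ → ℤ), (∀ i, 0 ≤ d i ∧ d i ≤ a - 1) ∧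
      |x| = ∑ i ∈ range m, (d i : ℝ) * β^i := by
  obtain ⟨N, hw, hT⟩ := hx
  set w := |x| / β ^ N with hwdef
  have ha1 : 1 ≤ a := by
    have h : (0:ℝ) < (a:ℝ) := hβ0.trans hβa
    have : (0:ℤ) < a := by exact_mod_cast h
    omega
  have hβN : (0:ℝ) < β ^ N := pow_pos hβ0 N
  have hxw : |x| = β ^ N * w := by rw [hwdef]; field_simp
  have hexp := expand β w N
  rw [hT, add_zero] at hexp
  have hiter : ∀ k, (betaT β)^[k] w ∈ Set.Ico (0:ℝ) 1 := by
    intro k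
    induction k with
    | zero => exact hw
    | succ k ih =>
      rw [Function.iterate_succ_apply']
      exact ⟨by simp only [betaT]; linarith [Int.floor_le (β * (betaT β)^[k] w)],
        by simp only [betaT]; linarith [Int.lt_floor_add_one (β * (betaT β)^[k] w)]⟩
  refine ⟨N, fun j => if j < N then ⌊β * (betaT β)^[N-1-j] w⌋ else 0, ?_, ?_⟩
  · intro i
    dsimp only
    by_cases hi : i < N
    · rw [if_pos hi]
      have h1 := (hiter (N-1-i)).1
      have h2 := (hiter (N-1-i)).2
      constructor
      · exact Int.floor_nonneg.2 (by positivity)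
      · have hlt : β * (betaT β)^[N-1-i] w < (a:ℝ) := by nlinarith
        have := Int.floor_lt.2 hlt
        omega
    · rw [if_neg hi]
      exact ⟨le_refl 0, by omega⟩
  · dsimp only
    show |x| = ∑ i ∈ range N, ((if i < N then ⌊β * (betaT β)^[N-1-i] w⌋ else 0 : ℤ) : ℝ) * β^i
    rw [hxw, hexp,
      ← Finset.sum_range_reflect (fun i => ((if i < N then ⌊β * (betaT β)^[N-1-i] w⌋ else 0 : ℤ) : ℝ) * β^i) N]
    apply Finset.sum_congr rfl
    intro j hj
    rw [Finset.mem_range] at hj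
    have h1 : N - 1 - j < N := by omega
    rw [if_pos h1]
    have h2 : N - 1 - (N-1-j) = j := by omega
    rw [h2]

lemma conj_root {a b : ℤ} (hb : 2 ≤ b) (hba : b < a) {β t : ℝ}
    (hβ : β^3 - (a:ℝ)*β^2 + (b:ℝ)*β - 1 = 0) (ht : t^3 - (a:ℝ)*t^2 + (b:ℝ)*t - 1 = 0)
    (R : ℤ[X]) (hR : aeval β R = 0) : aeval t R = 0 := by
  set Cz : ℤ[X] := X^3 - C a * X^2 + C b * X - 1 with hCz
  have hCmonic : Cz.Monic := by rw [hCz]; monicity!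
  have hCdeg : Cz.natDegree = 3 := by rw [hCz]; compute_degree!
  set Cq : ℚ[X] := Cz.map (algebraMap ℤ ℚ) with hCq
  have hCqmonic : Cq.Monic := hCmonic.map _
  have hCqdeg : Cq.natDegree = 3 := by
    rw [hCq, Cz.natDegree_map_eq_of_injective (algebraMap ℤ ℚ).injective_int, hCdeg]
  have haevalCz : ∀ s : ℝ, s^3 - (a:ℝ)*s^2 + (b:ℝ)*s - 1 = 0 → aeval s Cz = 0 := by
    intro s hs
    rw [hCz]
    simp only [map_sub, map_add, map_mul, map_pow, map_one, aeval_X, aeval_C, eq_intCast, map_intCast]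
    push_cast
    linear_combination hs
  have haevalCq : ∀ s : ℝ, s^3 - (a:ℝ)*s^2 + (b:ℝ)*s - 1 = 0 → aeval s Cq = 0 := by
    intro s hs
    rw [hCq, aeval_map_algebraMap]
    exact haevalCz s hs
  -- no rational root
  have hnoroot : ∀ r : ℚ, aeval r Cz ≠ 0 := by
    intro r hr
    obtain ⟨r', hr'eq, hr'dvd⟩ := exists_integer_of_is_root_of_monic hCmonic hr
    have hc0 : Cz.coeff 0 = -1 := by rw [hCz]; simp
    rw [hc0] at hr'dvd
    have : r' = 1 ∨ r' = -1 := by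
      rcases Int.isUnit_iff.mp (isUnit_of_dvd_unit hr'dvd (by norm_num)) with h | h
      exacts [Or.inl h, Or.inr h]
    have heval : (r':ℚ)^3 - (a:ℚ)*(r':ℚ)^2 + (b:ℚ)*(r':ℚ) - 1 = 0 := by
      have := hr
      rw [hCz] at this
      simp only [map_sub, map_add, map_mul, map_pow, map_one, aeval_X, aeval_C, eq_intCast, map_intCast] at this
      rw [hr'eq] at this
      simp only [eq_intCast] at this
      push_cast at this ⊢
      linear_combination this
    rcases this with h | h <;> rw [h] at heval <;> push_cast at heval
    · have : (b:ℚ) = (a:ℚ) := by linarith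
      have : b = a := by exact_mod_cast this
      omega
    · have : (a:ℚ) + (b:ℚ) = -2 := by linarith
      have : a + b = -2 := by exact_mod_cast this
      omega
  have hirr : Irreducible Cq := by
    rw [Polynomial.irreducible_iff_roots_eq_zero_of_degree_le_three (by omega) (by omega)]
    by_contra h
    obtain ⟨r, hr⟩ := Multiset.exists_mem_of_ne_zero h
    rw [Polynomial.mem_roots (hCqmonic.ne_zero)] at hr
    have : aeval r Cz = 0 := by
      rw [aeval_def, ← Polynomial.eval_map, ← hCq]
      exact hr
    exact hnoroot r this
  have hmin : minpoly ℚ β = Cq :=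
    (minpoly.eq_of_irreducible_of_monic hirr (haevalCq β hβ) hCqmonic).symm
  have hdvd : Cq ∣ R.map (algebraMap ℤ ℚ) := by
    rw [← hmin]
    apply minpoly.dvd
    rw [aeval_map_algebraMap]
    exact hR
  obtain ⟨S, hS⟩ := hdvd
  have : aeval t (R.map (algebraMap ℤ ℚ)) = 0 := by
    rw [hS, map_mul, haevalCq t ht, zero_mul]
  rwa [aeval_map_algebraMap] at this

lemma aeval_sumC (u : ℕ → ℤ) (m : ℕ) (s : ℝ) :
    aeval s (∑ i ∈ range m, C (u i) * X^i : ℤ[X]) = ∑ i ∈ range m, (u i : ℝ) * s^i := by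
  rw [map_sum]
  apply Finset.sum_congr rfl
  intro i _
  simp [eq_intCast]

lemma myGeomLe {t : ℝ} (h0 : 0 ≤ t) (h1 : t < 1) (m : ℕ) :
    ∑ i ∈ range m, t^i ≤ (1-t)⁻¹ := by
  rw [geom_sum_eq h1.ne]
  rw [div_le_iff_of_neg (by linarith : t - 1 < 0)]
  have h2 : (1-t)⁻¹ * (t-1) = -1 := by
    rw [inv_mul_eq_div, div_eq_iff (by linarith : (1:ℝ)-t ≠ 0)]
    ring
  rw [h2]
  linarith [pow_nonneg h0 m]

lemma exists_L {a b : ℤ} (hb : 2 ≤ b) (hba : b < a) {β t : ℝ}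
    (hβ1 : 1 < β) (hβa : β < (a:ℝ)) (ht0 : 0 < t) (ht1 : t < 1)
    (hβroot : β^3 - (a:ℝ)*β^2 + (b:ℝ)*β - 1 = 0) (htroot : t^3 - (a:ℝ)*t^2 + (b:ℝ)*t - 1 = 0) :
    ∃ L : ℕ, ∀ x ∈ betaInt β, ∀ y ∈ betaInt β, x + y ∈ finBeta β → β^L*(x+y) ∈ betaInt β := by
  have hβ0 : (0:ℝ) < β := by linarith
  have h1t : (0:ℝ) < 1 - t := by linarith
  have hA1 : (1:ℝ) ≤ (a:ℝ) - 1 := by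
    have : (2:ℤ) ≤ a := by omega
    have : (2:ℝ) ≤ (a:ℝ) := by exact_mod_cast this
    linarith
  set K : ℝ := 2*((a:ℝ)-1) * (1-t)⁻¹ with hK
  have hKpos : 0 < K := by positivity
  obtain ⟨L, hL⟩ := exists_pow_lt_of_lt_one (inv_pos.mpr hKpos) ht1
  refine ⟨L, fun x hx y hy hfin => ?_⟩
  by_cases hz0 : x + y = 0
  · refine ⟨0, ?_, ?_⟩
    · rw [hz0]; norm_num
    · rw [hz0]; norm_num
  obtain ⟨N₀, n₀, hw, hT⟩ := hfin
  set w := |x+y| / β^N₀ with hwdef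
  have hβN₀ : (0:ℝ) < β^N₀ := pow_pos hβ0 N₀
  have hwne : w ≠ 0 := by
    rw [hwdef]
    exact div_ne_zero (abs_ne_zero.mpr hz0) (ne_of_gt hβN₀)
  have hex : ∃ n, (betaT β)^[n] w = 0 := ⟨n₀, hT⟩
  set n := Nat.find hex with hndef
  have hn := Nat.find_spec hex
  have hn1 : 1 ≤ n := by
    rcases Nat.eq_zero_or_pos n with h | h
    · exfalso
      apply hwne
      have h2 := hn
      rw [show Nat.find hex = 0 from h] at h2
      simpa using h2
    · exact h
  by_cases hcase : n ≤ N₀ + L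
  · refine ⟨N₀ + L, ?_, ?_⟩
    · have habs : |β^L*(x+y)| = β^L * |x+y| := by
        rw [abs_mul, abs_of_pos (pow_pos hβ0 L)]
      have hdiv : |β^L*(x+y)| / β^(N₀+L) = w := by
        rw [habs, hwdef, pow_add]
        field_simp
      rw [hdiv]; exact hw
    · have habs : |β^L*(x+y)| = β^L * |x+y| := by
        rw [abs_mul, abs_of_pos (pow_pos hβ0 L)]
      have hdiv : |β^L*(x+y)| / β^(N₀+L) = w := by
        rw [habs, hwdef, pow_add]
        field_simp
      rw [hdiv]
      obtain ⟨k, hk⟩ := Nat.le.dest hcase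
      rw [← hk, Nat.add_comm, Function.iterate_add_apply, hn, iter_zero]
  · exfalso
    push_neg at hcase
    set M := n - N₀ with hMdef
    have hML : L + 1 ≤ M := by omega
    have hnM : n = N₀ + M := by omega
    -- digit expansion of |x+y|
    have hexp := expand β w n
    rw [hn, add_zero] at hexp
    have hβn : β^n * w = β^M * |x+y| := by
      rw [hwdef, hnM, pow_add]
      field_simp
    set e' : ℕ → ℤ := fun j => ⌊β * (betaT β)^[n-1-j] w⌋ with he'
    have hzsum : β^M * |x+y| = ∑ j ∈ range n, (e' j : ℝ) * β^j := by
      rw [← hβn, hexp, ← Finset.sum_range_reflect]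
      apply Finset.sum_congr rfl
      intro j hj
      rw [Finset.mem_range] at hj
      have h1 : n - 1 - (n-1-j) = j := by omega
      simp only [he', h1]
    -- digit positivity and bounds for e'
    have he'nonneg : ∀ j < n, 0 ≤ e' j := by
      intro j _
      exact Int.floor_nonneg.2 (mul_nonneg hβ0.le (iter_mem hw _).1)
    have he'0 : 1 ≤ e' 0 := by
      have hv := iter_mem (β := β) hw (n-1)
      have hvne : (betaT β)^[n-1] w ≠ 0 := Nat.find_min hex (by omega)
      have hvpos : 0 < (betaT β)^[n-1] w := lt_of_le_of_ne hv.1 (Ne.symm hvne)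
      have hTn : betaT β ((betaT β)^[n-1] w) = 0 := by
        have h := hn
        rw [show Nat.find hex = (n-1)+1 by omega] at h
        rwa [Function.iterate_succ_apply'] at h
      have hfl : (⌊β * (betaT β)^[n-1] w⌋ : ℝ) = β * (betaT β)^[n-1] w := by
        simp only [betaT] at hTn
        linarith
      have : (0:ℝ) < (⌊β * (betaT β)^[n-1] w⌋ : ℝ) := by
        rw [hfl]; positivity
      have : 0 < ⌊β * (betaT β)^[n-1] w⌋ := by exact_mod_cast this
      simp only [he', Nat.sub_zero]
      omega
    -- representations of |x| and |y|
    obtain ⟨mx, c, hc, hcx⟩ := betaInt_rep hβ0 hβa hx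
    obtain ⟨my, d, hd, hdy⟩ := betaInt_rep hβ0 hβa hy
    -- signs
    obtain ⟨εx, εy, hεx, hεy, hzsgn⟩ :
        ∃ εx εy : ℤ, (εx = 1 ∨ εx = -1) ∧ (εy = 1 ∨ εy = -1) ∧
          |x+y| = (εx:ℝ) * |x| + (εy:ℝ) * |y| := by
      rcases abs_cases (x+y) with ⟨h,_⟩|⟨h,_⟩ <;>
        rcases abs_cases x with ⟨h1,_⟩|⟨h1,_⟩ <;>
        rcases abs_cases y with ⟨h2,_⟩|⟨h2,_⟩
      · exact ⟨1, 1, Or.inl rfl, Or.inl rfl, by push_cast; linarith⟩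
      · exact ⟨1, -1, Or.inl rfl, Or.inr rfl, by push_cast; linarith⟩
      · exact ⟨-1, 1, Or.inr rfl, Or.inl rfl, by push_cast; linarith⟩
      · exact ⟨-1, -1, Or.inr rfl, Or.inr rfl, by push_cast; linarith⟩
      · exact ⟨-1, -1, Or.inr rfl, Or.inr rfl, by push_cast; linarith⟩
      · exact ⟨-1, 1, Or.inr rfl, Or.inl rfl, by push_cast; linarith⟩
      · exact ⟨1, -1, Or.inl rfl, Or.inr rfl, by push_cast; linarith⟩
      · exact ⟨1, 1, Or.inl rfl, Or.inl rfl, by push_cast; linarith⟩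
    -- the integer polynomial
    set R : ℤ[X] := (∑ j ∈ range n, C (e' j) * X^j)
        - C εx * X^M * (∑ i ∈ range mx, C (c i) * X^i)
        - C εy * X^M * (∑ i ∈ range my, C (d i) * X^i) with hR
    have haevalR : ∀ s : ℝ, aeval s R
        = (∑ j ∈ range n, (e' j : ℝ) * s^j)
          - (εx:ℝ) * s^M * (∑ i ∈ range mx, (c i : ℝ) * s^i)
          - (εy:ℝ) * s^M * (∑ i ∈ range my, (d i : ℝ) * s^i) := by
      intro s
      rw [hR, map_sub, map_sub, map_mul, map_mul, map_mul, map_mul,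
        aeval_sumC, aeval_sumC, aeval_sumC, aeval_C, aeval_C, aeval_X_pow]
      simp only [eq_intCast]
    have hRβ : aeval β R = 0 := by
      rw [haevalR, ← hcx, ← hdy]
      have : (∑ j ∈ range n, (e' j : ℝ) * β^j) = β^M * |x+y| := hzsum.symm
      rw [this, hzsgn]
      ring
    have hRt := conj_root hb hba hβroot htroot R hRβ
    rw [haevalR] at hRt
    -- bounds
    set Xc := ∑ i ∈ range mx, (c i : ℝ) * t^i with hXc
    set Yc := ∑ i ∈ range my, (d i : ℝ) * t^i with hYc
    have hXc0 : 0 ≤ Xc := Finset.sum_nonneg fun i _ =>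
      mul_nonneg (by exact_mod_cast (hc i).1) (pow_nonneg ht0.le i)
    have hYc0 : 0 ≤ Yc := Finset.sum_nonneg fun i _ =>
      mul_nonneg (by exact_mod_cast (hd i).1) (pow_nonneg ht0.le i)
    have hXcle : Xc ≤ ((a:ℝ)-1) * (1-t)⁻¹ := by
      calc Xc ≤ ∑ i ∈ range mx, ((a:ℝ)-1) * t^i := by
            apply Finset.sum_le_sum
            intro i _
            apply mul_le_mul_of_nonneg_right _ (pow_nonneg ht0.le i)
            have := (hc i).2
            have : ((c i : ℝ)) ≤ ((a:ℝ) - 1) := by exact_mod_cast this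
            exact this
        _ = ((a:ℝ)-1) * ∑ i ∈ range mx, t^i := by rw [Finset.mul_sum]
        _ ≤ ((a:ℝ)-1) * (1-t)⁻¹ := by
            apply mul_le_mul_of_nonneg_left (myGeomLe ht0.le ht1 mx) (by linarith)
    have hYcle : Yc ≤ ((a:ℝ)-1) * (1-t)⁻¹ := by
      calc Yc ≤ ∑ i ∈ range my, ((a:ℝ)-1) * t^i := by
            apply Finset.sum_le_sum
            intro i _
            apply mul_le_mul_of_nonneg_right _ (pow_nonneg ht0.le i)
            have := (hd i).2
            have : ((d i : ℝ)) ≤ ((a:ℝ) - 1) := by exact_mod_cast this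
            exact this
        _ = ((a:ℝ)-1) * ∑ i ∈ range my, t^i := by rw [Finset.mul_sum]
        _ ≤ ((a:ℝ)-1) * (1-t)⁻¹ := by
            apply mul_le_mul_of_nonneg_left (myGeomLe ht0.le ht1 my) (by linarith)
    have hLHS : (1:ℝ) ≤ ∑ j ∈ range n, (e' j : ℝ) * t^j := by
      have h0mem : 0 ∈ range n := Finset.mem_range.mpr (by omega)
      have := Finset.single_le_sum (f := fun j => (e' j : ℝ) * t^j)
        (fun j hj => mul_nonneg (by exact_mod_cast he'nonneg j (Finset.mem_range.mp hj))
          (pow_nonneg ht0.le j)) h0mem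
      have h1 : (1:ℝ) ≤ (e' 0 : ℝ) * t^0 := by
        rw [pow_zero, mul_one]
        exact_mod_cast he'0
      linarith
    have hRHS : (εx:ℝ) * t^M * Xc + (εy:ℝ) * t^M * Yc ≤ t^M * (Xc + Yc) := by
      have htM : (0:ℝ) ≤ t^M := pow_nonneg ht0.le M
      have hx1 := mul_nonneg htM hXc0
      have hy1 := mul_nonneg htM hYc0
      have h1 : (εx:ℝ) * t^M * Xc ≤ t^M * Xc := by
        rcases hεx with h | h <;> rw [h] <;> push_cast <;> linarith
      have h2 : (εy:ℝ) * t^M * Yc ≤ t^M * Yc := by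
        rcases hεy with h | h <;> rw [h] <;> push_cast <;> linarith
      linarith
    have htMK : t^M * (Xc + Yc) < 1 := by
      have htM : t^M ≤ t^L := pow_le_pow_of_le_one ht0.le ht1.le (by omega)
      have h1 : Xc + Yc ≤ K := by rw [hK]; linarith
      have h2 : t^M * (Xc + Yc) ≤ t^L * K := by
        apply mul_le_mul htM h1 (by linarith) (pow_nonneg ht0.le L)
      have h3 : t^L * K < K⁻¹ * K := by
        apply mul_lt_mul_of_pos_right hL hKpos
      rw [inv_mul_cancel₀ (ne_of_gt hKpos)] at h3
      linarith
    have : (1:ℝ) < 1 := by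
      calc (1:ℝ) ≤ ∑ j ∈ range n, (e' j : ℝ) * t^j := hLHS
        _ = (εx:ℝ) * t^M * Xc + (εy:ℝ) * t^M * Yc := by linarith [hRt]
        _ ≤ t^M * (Xc + Yc) := hRHS
        _ < 1 := htMK
    linarith

set_option maxHeartbeats 1000000 in
lemma counterexample {a b : ℤ} (hb : 2 ≤ b) (hba : b < a) {β : ℝ}
    (hβl : (a:ℝ) - 1 < β) (hβa : β < (a:ℝ)) (hcube : β^3 = (a:ℝ)*β^2 - (b:ℝ)*β + 1) :
    ((a:ℝ)-1)*β^3 ∈ betaInt β ∧ (β^3 + (b:ℝ)) ∈ betaInt β ∧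
    (((a:ℝ)-1)*β^3 + (β^3+(b:ℝ))) ∈ finBeta β ∧
    (((a:ℝ)-1)*β^3 + (β^3+(b:ℝ))) ∉ betaInt β := by
  have hA3 : (3:ℝ) ≤ (a:ℝ) := by exact_mod_cast (by omega : (3:ℤ) ≤ a)
  have hB2 : (2:ℝ) ≤ (b:ℝ) := by exact_mod_cast hb
  have hBA : (b:ℝ) ≤ (a:ℝ) - 1 := by
    have : (b:ℝ) + 1 ≤ (a:ℝ) := by exact_mod_cast (by omega : b + 1 ≤ a)
    linarith
  have hβ2 : (2:ℝ) < β := by linarith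
  have hβ0 : (0:ℝ) < β := by linarith
  have hβb : (b:ℝ) < β := by linarith
  have h4 : β^4 = (a:ℝ)*β^3 - (b:ℝ)*β^2 + β := by linear_combination β * hcube
  have hsq : β^2 - (a:ℝ)*β + (b:ℝ) = 1/β := by
    rw [eq_div_iff (ne_of_gt (by linarith : (0:ℝ) < β))]
    linear_combination hcube
  have hβsq : (a:ℝ) + 1 ≤ β^2 := by nlinarith [mul_self_nonneg (β - ((a:ℝ)-1)), hA3, hβl]
  set A := (a:ℝ)
  set B := (b:ℝ)
  set z := A*β^3 + B with hz
  have hkey : z - β^4 - (B-1)*β^2 - (A-1)*β = 1/β := by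
    rw [hz, eq_div_iff (ne_of_gt hβ0)]
    linear_combination (1 - β^2) * hcube
  have hzb4 : β^4 < z := by nlinarith
  have hzb4' : z < 2*β^4 := by nlinarith
  have hz43 : z < β^4 + β^3 := by
    have hp : (0:ℝ) < (β^2+1)*(β-B) := by
      apply mul_pos (by positivity) (by linarith)
    nlinarith [h4]
  have hzb5 : z < β^5 := by nlinarith [pow_pos hβ0 3]
  have hβ40 : (0:ℝ) < β^4 := by positivity
  have hβ50 : (0:ℝ) < β^5 := by positivity
  -- x = (A-1)β³
  have hxmem : (A-1)*β^3 ∈ betaInt β := by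
    refine ⟨4, ⟨?_, ?_⟩, ?_⟩
    · rw [abs_of_nonneg (by nlinarith)]
      apply div_nonneg (by nlinarith) hβ40.le
    · rw [abs_of_nonneg (by nlinarith), div_lt_one hβ40]
      nlinarith
    · rw [abs_of_nonneg (by nlinarith)]
      have e1 : betaT β ((A-1)*β^3/β^4) = 0 :=
        betaT_step (a-1) (by push_cast; field_simp; ring) le_rfl one_pos
      have hit : (betaT β)^[4] ((A-1)*β^3/β^4)
          = (betaT β)^[3] (betaT β ((A-1)*β^3/β^4)) := rfl
      rw [hit, e1, iter_zero]
  -- y = β³ + B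
  have hymem : β^3 + B ∈ betaInt β := by
    have hy0 : (0:ℝ) ≤ β^3 + B := by positivity
    have e1 : betaT β ((β^3+B)/β^4) = B/β^3 :=
      betaT_step 1 (by push_cast; field_simp) (by positivity)
        (by rw [div_lt_one (by positivity)]; nlinarith)
    have e2 : betaT β (B/β^3) = B/β^2 :=
      betaT_step 0 (by push_cast; field_simp; ring) (by positivity)
        (by rw [div_lt_one (by positivity)]; nlinarith)
    have e3 : betaT β (B/β^2) = B/β :=
      betaT_step 0 (by push_cast; field_simp; ring) (by positivity)
        (by rw [div_lt_one hβ0]; linarith)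
    have e4 : betaT β (B/β) = 0 :=
      betaT_step b (by push_cast; field_simp; exact (add_zero _).symm) le_rfl one_pos
    refine ⟨4, ⟨?_, ?_⟩, ?_⟩
    · rw [abs_of_nonneg hy0]; positivity
    · rw [abs_of_nonneg hy0, div_lt_one hβ40]
      nlinarith
    · rw [abs_of_nonneg hy0]
      have hit : (betaT β)^[4] ((β^3+B)/β^4)
          = betaT β (betaT β (betaT β (betaT β ((β^3+B)/β^4)))) := rfl
      rw [hit, e1, e2, e3, e4]
  -- the orbit of z/β^5
  have hz0 : (0:ℝ) < z := by positivity
  have e1 : betaT β (z/β^5) = (z-β^4)/β^4 :=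
    betaT_step 1 (by push_cast; field_simp; ring)
      (by apply div_nonneg (by linarith) hβ40.le)
      (by rw [div_lt_one hβ40]; linarith)
  have e2 : betaT β ((z-β^4)/β^4) = (z-β^4)/β^3 :=
    betaT_step 0 (by push_cast; field_simp; ring)
      (by apply div_nonneg (by linarith) (by positivity))
      (by rw [div_lt_one (by positivity)]; linarith)
  have e3 : betaT β ((z-β^4)/β^3) = (z-β^4-(B-1)*β^2)/β^2 :=
    betaT_step (b-1) (by push_cast; field_simp; ring)
      (by
        apply div_nonneg _ (by positivity)
        have h1β : (0:ℝ) < 1/β := by positivity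
        nlinarith [hkey])
      (by
        rw [div_lt_one (by positivity)]
        have h1β : (0:ℝ) < 1/β := by positivity
        nlinarith [hkey, hsq])
  have e4 : betaT β ((z-β^4-(B-1)*β^2)/β^2) = 1/β^2 := by
    apply betaT_step (a-1)
    · have harg : z-β^4-(B-1)*β^2 = (A-1)*β + 1/β := by linarith [hkey]
      rw [harg]
      push_cast
      field_simp
      ring
    · positivity
    · rw [div_lt_one (by positivity)]; nlinarith
  have e5 : betaT β (1/β^2) = 1/β :=
    betaT_step 0 (by push_cast; field_simp; ring) (by positivity)
      (by rw [div_lt_one hβ0]; linarith)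
  have e6 : betaT β (1/β) = 0 :=
    betaT_step 1 (by push_cast; field_simp; exact (add_zero _).symm) le_rfl one_pos
  have h5 : (betaT β)^[5] (z/β^5) = 1/β := by
    have hit : (betaT β)^[5] (z/β^5)
        = betaT β (betaT β (betaT β (betaT β (betaT β (z/β^5))))) := rfl
    rw [hit, e1, e2, e3, e4, e5]
  have hzw : z/β^5 ∈ Set.Ico (0:ℝ) 1 :=
    ⟨by positivity, by rw [div_lt_one hβ50]; linarith⟩
  constructor
  · exact hxmem
  constructor
  · exact hymem
  have hsum : (A-1)*β^3 + (β^3+B) = z := by rw [hz]; ring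
  constructor
  · -- z ∈ finBeta
    rw [hsum]
    refine ⟨5, 6, ?_, ?_⟩
    · rw [abs_of_pos hz0]; exact hzw
    · rw [abs_of_pos hz0]
      have hit : (betaT β)^[6] (z/β^5) = betaT β ((betaT β)^[5] (z/β^5)) := rfl
      rw [hit, h5, e6]
  · -- z ∉ betaInt
    rw [hsum]
    rintro ⟨N, hIco, hT⟩
    rw [abs_of_pos hz0] at hIco hT
    by_cases hN : N ≤ 4
    · have hle : β^N ≤ β^4 := pow_le_pow_right₀ (by linarith) hN
      have := (div_lt_one (pow_pos hβ0 N)).mp hIco.2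
      linarith
    · push_neg at hN
      obtain ⟨k, rfl⟩ := Nat.exists_eq_add_of_le (by omega : 5 ≤ N)
      have hshift : ∀ j : ℕ, (betaT β)^[5+j] (z/β^(5+j)) = 1/β := by
        intro j
        induction j with
        | zero => exact h5
        | succ j ih =>
          have hstep : betaT β (z/β^(5+(j+1))) = z/β^(5+j) := by
            apply betaT_step 0
            · push_cast
              rw [pow_add, pow_add, pow_add]
              field_simp
              ring
            · positivity
            · rw [div_lt_one (pow_pos hβ0 _)]
              have : β^5 ≤ β^(5+j) := pow_le_pow_right₀ (by linarith) (by omega)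
              linarith
          have hit : (betaT β)^[5+(j+1)] (z/β^(5+(j+1)))
              = (betaT β)^[5+j] (betaT β (z/β^(5+(j+1)))) := by
            rw [show 5+(j+1) = (5+j)+1 by omega, Function.iterate_succ_apply]
          rw [hit, hstep, ih]
      have h0 := hshift k
      rw [hT] at h0
      have hpos : (0:ℝ) < 1/β := by positivity
      linarith

end Aux

theorem stmt3 (a b : ℤ) (hb : 2 ≤ b) (hba : b < a) (β β' β'' : ℝ)
    (hβ : 1 < β) (hβ' : β' ∈ Set.Ioo (0 : ℝ) 1) (hβ'' : β'' ∈ Set.Ioo (0 : ℝ) 1)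
    (hroots : ∀ x : ℝ, x ^ 3 - (a : ℝ) * x ^ 2 + (b : ℝ) * x - 1
      = (x - β) * (x - β') * (x - β'')) :
    1 ≤ Lplus β ∧
    ∃ x ∈ betaInt β, ∃ y ∈ betaInt β, x + y ∈ finBeta β ∧ x + y ∉ betaInt β := by
  have hβ0 : (0:ℝ) < β := by linarith
  have hA3 : (3:ℝ) ≤ (a:ℝ) := by exact_mod_cast (by omega : (3:ℤ) ≤ a)
  have hB2 : (2:ℝ) ≤ (b:ℝ) := by exact_mod_cast hb
  have hBA : (b:ℝ) ≤ (a:ℝ) - 1 := by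
    have : (b:ℝ) + 1 ≤ (a:ℝ) := by exact_mod_cast (by omega : b + 1 ≤ a)
    linarith
  have hβroot : β^3 - (a:ℝ)*β^2 + (b:ℝ)*β - 1 = 0 := by rw [hroots β]; ring
  have htroot : β'^3 - (a:ℝ)*β'^2 + (b:ℝ)*β' - 1 = 0 := by rw [hroots β']; ring
  obtain ⟨ht0, ht1⟩ := hβ'
  obtain ⟨hs0, hs1⟩ := hβ''
  -- β < a
  have hβa : β < (a:ℝ) := by
    by_contra hc
    push_neg at hc
    have h := hroots (a:ℝ)
    have h1 : (0:ℝ) < (a:ℝ) - β' := by linarith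
    have h2 : (0:ℝ) < (a:ℝ) - β'' := by linarith
    have h3 : ((a:ℝ) - β) * (((a:ℝ) - β') * ((a:ℝ) - β'')) ≤ 0 :=
      mul_nonpos_of_nonpos_of_nonneg (by linarith) (mul_pos h1 h2).le
    have h6 : (6:ℝ) ≤ (a:ℝ)*(b:ℝ) := by nlinarith
    nlinarith [h, h3]
  -- a - 1 < β
  have hβl : (a:ℝ) - 1 < β := by
    by_contra hc
    push_neg at hc
    have h := hroots ((a:ℝ) - 1)
    have h1 : (0:ℝ) < (a:ℝ) - 1 - β' := by linarith
    have h2 : (0:ℝ) < (a:ℝ) - 1 - β'' := by linarith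
    have h3 : (0:ℝ) ≤ ((a:ℝ) - 1 - β) * (((a:ℝ) - 1 - β') * ((a:ℝ) - 1 - β'')) :=
      mul_nonneg (by linarith) (mul_pos h1 h2).le
    have h4 : ((a:ℝ)-1) * ((b:ℝ) - (a:ℝ) + 1) ≤ 0 :=
      mul_nonpos_of_nonneg_of_nonpos (by linarith) (by linarith)
    nlinarith [h, h3]
  have hcube : β^3 = (a:ℝ)*β^2 - (b:ℝ)*β + 1 := by linarith
  obtain ⟨hxmem, hymem, hfin, hnot⟩ := counterexample hb hba hβl hβa hcube
  obtain ⟨L₀, hL₀⟩ := exists_L hb hba hβ hβa ht0 ht1 hβroot htroot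
  constructor
  · -- 1 ≤ Lplus β
    rw [Lplus]
    have hne : {L : ℕ | ∀ x ∈ betaInt β, ∀ y ∈ betaInt β,
        x + y ∈ finBeta β → β ^ L * (x + y) ∈ betaInt β}.Nonempty := ⟨L₀, hL₀⟩
    have h0 : 0 ∉ {L : ℕ | ∀ x ∈ betaInt β, ∀ y ∈ betaInt β,
        x + y ∈ finBeta β → β ^ L * (x + y) ∈ betaInt β} := by
      intro h
      apply hnot
      have := h _ hxmem _ hymem hfin
      simpa using this
    refine Nat.one_le_iff_ne_zero.mpr fun h => ?_
    rcases Nat.sInf_eq_zero.mp h with h' | h'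
    · exact h0 h'
    · exact (Set.nonempty_iff_ne_empty.mp hne) h'
  · exact ⟨_, hxmem, _, hymem, hfin, hnot⟩
end

section
/- Let a, b be integers with 0 < b < a and let β be the unique real root greater than 1 of the polynomial P(X) = X^3 − aX^2 − bX + 1. Then L_⊕(β) ≥ 1; more precisely, there exist x, y ∈ ℤ_β with x + y ∈ fin(β) but x + y ∉ ℤ_β. -/
open Polynomial

namespace Stmt5aux

/-! ### Triple arithmetic: `(p,q,r)` represents `p + q x + r x²` -/

def e3 (x : ℝ) (t : ℤ × ℤ × ℤ) : ℝ := t.1 + t.2.1 * x + t.2.2 * x ^ 2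

def mulT (a b : ℤ) (t : ℤ × ℤ × ℤ) : ℤ × ℤ × ℤ :=
  (-t.2.2, t.1 + b * t.2.2, t.2.1 + a * t.2.2)

def divT (a b : ℤ) (t : ℤ × ℤ × ℤ) : ℤ × ℤ × ℤ :=
  (t.2.1 + b * t.1, t.2.2 + a * t.1, -t.1)

lemma e3_mulT {a b : ℤ} {x : ℝ} (hx : x ^ 3 - (a:ℝ) * x ^ 2 - (b:ℝ) * x + 1 = 0)
    (t : ℤ × ℤ × ℤ) : e3 x (mulT a b t) = x * e3 x t := by
  simp only [e3, mulT]
  push_cast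
  linear_combination (-(t.2.2:ℝ)) * hx

lemma e3_divT {a b : ℤ} {x : ℝ} (hx : x ^ 3 - (a:ℝ) * x ^ 2 - (b:ℝ) * x + 1 = 0)
    (hx0 : x ≠ 0) (t : ℤ × ℤ × ℤ) : e3 x (divT a b t) = e3 x t / x := by
  rw [eq_div_iff hx0]
  simp only [e3, divT]
  push_cast
  linear_combination (-(t.1:ℝ)) * hx

lemma e3_neg (x : ℝ) (t : ℤ × ℤ × ℤ) : e3 x (-t) = -e3 x t := by
  simp only [e3, Prod.fst_neg, Prod.snd_neg]
  push_cast; ring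

lemma e3_add (x : ℝ) (t u : ℤ × ℤ × ℤ) : e3 x (t + u) = e3 x t + e3 x u := by
  simp only [e3, Prod.fst_add, Prod.snd_add]
  push_cast; ring

lemma e3_sub_d (x : ℝ) (t : ℤ × ℤ × ℤ) (d : ℤ) :
    e3 x (t - (d, 0, 0)) = e3 x t - d := by
  simp only [e3, Prod.fst_sub, Prod.snd_sub]
  push_cast; ring

lemma e3_mulT_iter {a b : ℤ} {x : ℝ} (hx : x ^ 3 - (a:ℝ) * x ^ 2 - (b:ℝ) * x + 1 = 0)
    (n : ℕ) (t : ℤ × ℤ × ℤ) : e3 x ((mulT a b)^[n] t) = x ^ n * e3 x t := by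
  induction n with
  | zero => simp
  | succ n ih =>
    rw [Function.iterate_succ_apply', e3_mulT hx, ih]; ring

lemma e3_divT_iter {a b : ℤ} {x : ℝ} (hx : x ^ 3 - (a:ℝ) * x ^ 2 - (b:ℝ) * x + 1 = 0)
    (hx0 : x ≠ 0) (n : ℕ) (t : ℤ × ℤ × ℤ) :
    e3 x ((divT a b)^[n] t) = e3 x t / x ^ n := by
  induction n with
  | zero => simp
  | succ n ih =>
    rw [Function.iterate_succ_apply', e3_divT hx hx0, ih, pow_succ, div_div]

/-! ### Basic facts about the β-transformation -/

lemma betaT_eq_fract (β x : ℝ) : betaT β x = Int.fract (β * x) := rfl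

lemma betaT_mem_Ico (β x : ℝ) : betaT β x ∈ Set.Ico (0:ℝ) 1 := by
  rw [betaT_eq_fract]
  exact ⟨Int.fract_nonneg _, Int.fract_lt_one _⟩

lemma betaT_zero (β : ℝ) : betaT β 0 = 0 := by
  rw [betaT_eq_fract, mul_zero, Int.fract_zero]

lemma betaT_iter_zero (β : ℝ) (n : ℕ) : (betaT β)^[n] 0 = 0 := by
  induction n with
  | zero => rfl
  | succ n ih => rw [Function.iterate_succ_apply', ih, betaT_zero]

lemma betaT_iter_absorb {β x : ℝ} {m : ℕ} (h : (betaT β)^[m] x = 0) {k : ℕ} (hk : m ≤ k) :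
    (betaT β)^[k] x = 0 := by
  obtain ⟨j, rfl⟩ := Nat.exists_eq_add_of_le hk
  rw [Nat.add_comm, Function.iterate_add_apply, h, betaT_iter_zero]

lemma climb {β z : ℝ} (hβ : 1 < β) (hz : 0 ≤ z) {m : ℕ} (hm : ∀ j, m ≤ j → z < β ^ j) :
    ∀ k N, m + k ≤ N → (betaT β)^[k] (z / β ^ N) = z / β ^ (N - k) := by
  have hβ0 : (0:ℝ) < β := lt_trans zero_lt_one hβ
  intro k
  induction k with
  | zero => intro N _; simp
  | succ k ih =>
    intro N hN
    have hN1 : m + k ≤ N - 1 := by omega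
    rw [Function.iterate_succ_apply]
    have hpow : β ^ N = β ^ (N - 1) * β := by
      rw [← pow_succ]; congr 1; omega
    have hstep : betaT β (z / β ^ N) = z / β ^ (N - 1) := by
      have hmul : β * (z / β ^ N) = z / β ^ (N - 1) := by
        rw [eq_div_iff (by positivity), hpow]
        field_simp
      rw [betaT_eq_fract, hmul, Int.fract_eq_self]
      refine ⟨by positivity, ?_⟩
      rw [div_lt_one (by positivity)]
      exact hm _ (by omega)
    rw [hstep, ih _ hN1]
    congr 2
    omega

/-! ### Location of β and of the conjugate roots -/

section roots
variable {a b : ℤ} {β : ℝ}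

lemma beta_gt_a (hb : 0 < b) (hβ : 1 < β)
    (hroot : β ^ 3 - (a : ℝ) * β ^ 2 - (b : ℝ) * β + 1 = 0) : (a:ℝ) < β := by
  have hb1 : (1:ℝ) ≤ b := by exact_mod_cast hb
  nlinarith [sq_nonneg β, mul_pos (zero_lt_one.trans hβ) (zero_lt_one.trans hβ)]

lemma beta_lt_a1 (hb : 0 < b) (hba : b < a) (hβ : 1 < β)
    (hroot : β ^ 3 - (a : ℝ) * β ^ 2 - (b : ℝ) * β + 1 = 0) : β < (a:ℝ) + 1 := by
  have hb1 : (b:ℝ) ≤ (a:ℝ) - 1 := by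
    exact_mod_cast by linarith [(show b + 1 ≤ a from hba)]
  nlinarith [sq_nonneg β, zero_lt_one.trans hβ]

lemma root_gamma (hb : 0 < b) (hba : b < a) :
    ∃ γ : ℝ, γ ∈ Set.Ioo (0:ℝ) 1 ∧ γ ^ 3 - (a : ℝ) * γ ^ 2 - (b : ℝ) * γ + 1 = 0 := by
  have hc : ContinuousOn (fun x : ℝ => x ^ 3 - (a : ℝ) * x ^ 2 - (b : ℝ) * x + 1)
      (Set.Icc 0 1) := by fun_prop
  have h0 : (fun x : ℝ => x ^ 3 - (a : ℝ) * x ^ 2 - (b : ℝ) * x + 1) 1 < 0 := by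
    have : (3:ℝ) ≤ (a:ℝ) + b := by
      have : (3:ℤ) ≤ a + b := by omega
      exact_mod_cast this
    simp only
    nlinarith
  have h1 : (0:ℝ) < (fun x : ℝ => x ^ 3 - (a : ℝ) * x ^ 2 - (b : ℝ) * x + 1) 0 := by norm_num
  obtain ⟨γ, hγ, hγ0⟩ := intermediate_value_Ioo' (le_of_lt zero_lt_one) hc ⟨h0, h1⟩
  exact ⟨γ, hγ, hγ0⟩

lemma root_delta (hb : 0 < b) (hba : b < a) :
    ∃ δ : ℝ, δ ∈ Set.Ioo (-1:ℝ) 0 ∧ δ ^ 3 - (a : ℝ) * δ ^ 2 - (b : ℝ) * δ + 1 = 0 := by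
  have hc : ContinuousOn (fun x : ℝ => x ^ 3 - (a : ℝ) * x ^ 2 - (b : ℝ) * x + 1)
      (Set.Icc (-1) 0) := by fun_prop
  have h0 : (fun x : ℝ => x ^ 3 - (a : ℝ) * x ^ 2 - (b : ℝ) * x + 1) (-1) < 0 := by
    have : (b:ℝ) < a := by exact_mod_cast hba
    simp only
    nlinarith
  have h1 : (0:ℝ) < (fun x : ℝ => x ^ 3 - (a : ℝ) * x ^ 2 - (b : ℝ) * x + 1) 0 := by norm_num
  obtain ⟨δ, hδ, hδ0⟩ := intermediate_value_Ioo (by norm_num : (-1:ℝ) ≤ 0) hc ⟨h0, h1⟩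
  exact ⟨δ, hδ, hδ0⟩

end roots

/-! ### Finiteness of bounded sets of `ℤ[β]` elements -/

lemma finite_F {β γ δ : ℝ} (h1 : δ < γ) (h2 : γ < β) (Kγ Kδ : ℝ) :
    {v : ℝ | ∃ t : ℤ × ℤ × ℤ, e3 β t = v ∧ |v| ≤ 1 ∧ |e3 γ t| ≤ Kγ ∧ |e3 δ t| ≤ Kδ}.Finite := by
  set M : ℝ := max 1 (max Kγ Kδ) with hM
  have hM1 : (1:ℝ) ≤ M := le_max_left _ _
  have hMγ : Kγ ≤ M := le_trans (le_max_left _ _) (le_max_right _ _)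
  have hMδ : Kδ ≤ M := le_trans (le_max_right _ _) (le_max_right _ _)
  have hβγ : (0:ℝ) < β - γ := by linarith
  have hβδ : (0:ℝ) < β - δ := by linarith
  have hγδ : (0:ℝ) < γ - δ := by linarith
  set D : ℝ := (β-γ)*(β-δ)*(γ-δ) with hD
  have hD0 : 0 < D := by positivity
  set Br : ℝ := (2*M*(β-δ) + 2*M*(β-γ)) / D with hBr
  set Bq : ℝ := (2*M + Br * |β^2-γ^2|) / (β-γ) with hBq
  set Bp : ℝ := M + Bq * |β| + Br * β^2 with hBp
  set c : ℤ := max (max ⌈Bp⌉ ⌈Bq⌉) ⌈Br⌉ with hc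
  have key : ∀ t : ℤ × ℤ × ℤ, |e3 β t| ≤ M → |e3 γ t| ≤ M → |e3 δ t| ≤ M →
      |(t.1:ℝ)| ≤ Bp ∧ |(t.2.1:ℝ)| ≤ Bq ∧ |(t.2.2:ℝ)| ≤ Br := by
    intro t hβb hγb hδb
    have e1 : |e3 β t - e3 γ t| ≤ 2*M := le_trans (abs_sub _ _) (by linarith)
    have e2 : |e3 β t - e3 δ t| ≤ 2*M := le_trans (abs_sub _ _) (by linarith)
    have hr : (t.2.2:ℝ) * D = (e3 β t - e3 γ t)*(β-δ) - (e3 β t - e3 δ t)*(β-γ) := by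
      simp only [e3, hD]; ring
    have hrb : |(t.2.2:ℝ)| ≤ Br := by
      rw [hBr, le_div_iff₀ hD0]
      have habs : |(t.2.2:ℝ) * D| ≤ 2*M*(β-δ) + 2*M*(β-γ) := by
        rw [hr]
        have t1 : |(e3 β t - e3 γ t)*(β-δ)| ≤ 2*M*(β-δ) := by
          rw [abs_mul, abs_of_pos hβδ]
          exact mul_le_mul_of_nonneg_right e1 (le_of_lt hβδ)
        have t2 : |(e3 β t - e3 δ t)*(β-γ)| ≤ 2*M*(β-γ) := by
          rw [abs_mul, abs_of_pos hβγ]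
          exact mul_le_mul_of_nonneg_right e2 (le_of_lt hβγ)
        exact le_trans (abs_sub _ _) (by linarith)
      calc |(t.2.2:ℝ)| * D = |(t.2.2:ℝ) * D| := by rw [abs_mul, abs_of_pos hD0]
        _ ≤ 2*M*(β-δ) + 2*M*(β-γ) := habs
    have hq : (t.2.1:ℝ) * (β-γ) = (e3 β t - e3 γ t) - t.2.2*(β^2-γ^2) := by
      simp only [e3]; ring
    have hqb : |(t.2.1:ℝ)| ≤ Bq := by
      rw [hBq, le_div_iff₀ hβγ]
      have habs : |(t.2.1:ℝ) * (β-γ)| ≤ 2*M + Br * |β^2-γ^2| := by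
        rw [hq]
        have t2 : |(t.2.2:ℝ)*(β^2-γ^2)| ≤ Br * |β^2-γ^2| := by
          rw [abs_mul]
          exact mul_le_mul_of_nonneg_right hrb (abs_nonneg _)
        exact le_trans (abs_sub _ _) (by linarith)
      calc |(t.2.1:ℝ)| * (β-γ) = |(t.2.1:ℝ) * (β-γ)| := by rw [abs_mul, abs_of_pos hβγ]
        _ ≤ 2*M + Br * |β^2-γ^2| := habs
    have hp : (t.1:ℝ) = e3 β t - t.2.1*β - t.2.2*β^2 := by
      simp only [e3]; ring
    have hpb : |(t.1:ℝ)| ≤ Bp := by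
      rw [hp, hBp]
      have t1 : |(t.2.1:ℝ)*β| ≤ Bq * |β| := by
        rw [abs_mul]; exact mul_le_mul_of_nonneg_right hqb (abs_nonneg _)
      have t2 : |(t.2.2:ℝ)*β^2| ≤ Br * β^2 := by
        rw [abs_mul, abs_of_nonneg (sq_nonneg β)]
        exact mul_le_mul_of_nonneg_right hrb (sq_nonneg _)
      have step1 : |e3 β t - t.2.1*β - t.2.2*β^2| ≤ |e3 β t - t.2.1*β| + |(t.2.2:ℝ)*β^2| :=
        abs_sub _ _
      have step2 : |e3 β t - (t.2.1:ℝ)*β| ≤ |e3 β t| + |(t.2.1:ℝ)*β| := abs_sub _ _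
      linarith
    exact ⟨hpb, hqb, hrb⟩
  have hsub : {v : ℝ | ∃ t : ℤ × ℤ × ℤ, e3 β t = v ∧ |v| ≤ 1 ∧ |e3 γ t| ≤ Kγ ∧ |e3 δ t| ≤ Kδ}
      ⊆ e3 β '' ↑(Finset.Icc ((-c, -c, -c) : ℤ × ℤ × ℤ) (c, c, c)) := by
    rintro v ⟨t, rfl, hv, hγb, hδb⟩
    refine ⟨t, ?_, rfl⟩
    have hb := key t (le_trans hv hM1) (le_trans hγb hMγ) (le_trans hδb hMδ)
    have habs : ∀ (m : ℤ) (B : ℝ), |(m:ℝ)| ≤ B → ⌈B⌉ ≤ c → -c ≤ m ∧ m ≤ c := by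
      intro m B hmB hBc
      have h1 : (m:ℝ) ≤ B := le_trans (le_abs_self _) hmB
      have h2 : -B ≤ (m:ℝ) := neg_le_of_abs_le hmB
      have hb2 : (B:ℝ) ≤ (c:ℝ) := le_trans (Int.le_ceil B) (by exact_mod_cast hBc)
      constructor
      · exact_mod_cast (by linarith : (-(c:ℝ)) ≤ (m:ℝ))
      · exact_mod_cast le_trans h1 hb2
    have h1 := habs t.1 Bp hb.1 (le_trans (le_max_left _ _) (le_max_left _ _))
    have h2 := habs t.2.1 Bq hb.2.1 (le_trans (le_max_right _ _) (le_max_left _ _))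
    have h3 := habs t.2.2 Br hb.2.2 (le_max_right _ _)
    simp only [Finset.coe_Icc, Set.mem_Icc, Prod.le_def]
    exact ⟨⟨h1.1, h2.1, h3.1⟩, ⟨h1.2, h2.2, h3.2⟩⟩
  exact Set.Finite.subset (Set.Finite.image _ (Finset.finite_toSet _)) hsub

/-! ### Triples with conjugate bounds for β-integers -/

section triples
variable {a b : ℤ} {β : ℝ}

lemma digit_bounds (hβ0 : 0 < β) (hβa1 : β < (a:ℝ) + 1) {w : ℝ}
    (hw : w ∈ Set.Ico (0:ℝ) 1) : 0 ≤ ⌊β * w⌋ ∧ ((⌊β * w⌋:ℤ):ℝ) ≤ (a:ℝ) := by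
  have h0 : 0 ≤ β * w := mul_nonneg (le_of_lt hβ0) hw.1
  have h1 : β * w < (a:ℝ) + 1 := by
    calc β * w ≤ β * 1 := mul_le_mul_of_nonneg_left (le_of_lt hw.2) (le_of_lt hβ0)
      _ = β := mul_one β
      _ < (a:ℝ) + 1 := hβa1
  refine ⟨Int.floor_nonneg.2 h0, ?_⟩
  have : ⌊β * w⌋ < a + 1 := by
    rw [Int.floor_lt]
    exact_mod_cast h1
  exact_mod_cast (by omega : ⌊β * w⌋ ≤ a)

lemma bint_triple (hβ : 1 < β) (hβa1 : β < (a:ℝ) + 1)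
    (hroot : β ^ 3 - (a : ℝ) * β ^ 2 - (b : ℝ) * β + 1 = 0) :
    ∀ (N : ℕ) (w : ℝ), w ∈ Set.Ico (0:ℝ) 1 → (betaT β)^[N] w = 0 →
    ∃ t : ℤ × ℤ × ℤ, e3 β t = β ^ N * w ∧
      ∀ x : ℝ, x ^ 3 - (a:ℝ) * x ^ 2 - (b:ℝ) * x + 1 = 0 → |x| < 1 →
        |e3 x t| * (1 - |x|) ≤ (a:ℝ) * (1 - |x| ^ N) := by
  have hβ0 : (0:ℝ) < β := lt_trans zero_lt_one hβ
  intro N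
  induction N with
  | zero =>
    intro w hw h0
    simp only [Function.iterate_zero, id_eq] at h0
    subst h0
    refine ⟨0, by simp [e3], ?_⟩
    intro x _ _
    simp [e3]
  | succ N ih =>
    intro w hw hit
    rw [Function.iterate_succ_apply] at hit
    obtain ⟨t', ht'val, ht'bd⟩ := ih (betaT β w) (betaT_mem_Ico β w) hit
    set d : ℤ := ⌊β * w⌋ with hd
    obtain ⟨hd0, hda⟩ := digit_bounds hβ0 hβa1 hw
    refine ⟨(mulT a b)^[N] (d, 0, 0) + t', ?_, ?_⟩
    · rw [e3_add, e3_mulT_iter hroot, ht'val]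
      have : betaT β w = β * w - d := rfl
      rw [this]
      simp only [e3]
      push_cast
      ring
    · intro x hx hx1
      have hxa : (0:ℝ) ≤ |x| := abs_nonneg x
      have h1 : |e3 x ((mulT a b)^[N] (d, 0, 0))| = |x| ^ N * (d:ℝ) := by
        rw [e3_mulT_iter hx, abs_mul, abs_pow]
        congr 1
        simp only [e3]
        push_cast
        rw [abs_of_nonneg]
        · ring
        · simp only [mul_zero, zero_mul, add_zero]
          exact_mod_cast hd0
      have h2 : |e3 x ((mulT a b)^[N] (d, 0, 0) + t')| ≤ |x| ^ N * (d:ℝ) + |e3 x t'| := by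
        rw [e3_add]
        exact le_trans (abs_add_le _ _) (by rw [h1])
      have hbd := ht'bd x hx hx1
      have hdle : (d:ℝ) ≤ (a:ℝ) := hda
      have hxpow : (0:ℝ) ≤ |x| ^ N := pow_nonneg hxa N
      have h1x : (0:ℝ) < 1 - |x| := by linarith
      calc |e3 x ((mulT a b)^[N] (d, 0, 0) + t')| * (1 - |x|)
          ≤ (|x| ^ N * (d:ℝ) + |e3 x t'|) * (1 - |x|) :=
            mul_le_mul_of_nonneg_right h2 (le_of_lt h1x)
        _ = |x| ^ N * (d:ℝ) * (1 - |x|) + |e3 x t'| * (1 - |x|) := by ring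
        _ ≤ |x| ^ N * (a:ℝ) * (1 - |x|) + (a:ℝ) * (1 - |x| ^ N) := by
            have : |x| ^ N * (d:ℝ) * (1 - |x|) ≤ |x| ^ N * (a:ℝ) * (1 - |x|) := by
              have := mul_le_mul_of_nonneg_left hdle hxpow
              nlinarith
            linarith
        _ = (a:ℝ) * (1 - |x| ^ (N+1)) := by ring

lemma mem_betaInt_triple (hβ : 1 < β) (hβa1 : β < (a:ℝ) + 1)
    (hroot : β ^ 3 - (a : ℝ) * β ^ 2 - (b : ℝ) * β + 1 = 0)
    {z : ℝ} (hz : z ∈ betaInt β) :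
    ∃ t : ℤ × ℤ × ℤ, e3 β t = z ∧
      ∀ x : ℝ, x ^ 3 - (a:ℝ) * x ^ 2 - (b:ℝ) * x + 1 = 0 → |x| < 1 →
        |e3 x t| * (1 - |x|) ≤ (a:ℝ) := by
  obtain ⟨N, hIco, hit⟩ := hz
  obtain ⟨t, htval, htbd⟩ := bint_triple hβ hβa1 hroot N _ hIco hit
  have hβ0 : (0:ℝ) < β := lt_trans zero_lt_one hβ
  have habs : β ^ N * (|z| / β ^ N) = |z| := by field_simp
  have hbd : ∀ x : ℝ, x ^ 3 - (a:ℝ) * x ^ 2 - (b:ℝ) * x + 1 = 0 → |x| < 1 →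
      |e3 x t| * (1 - |x|) ≤ (a:ℝ) := by
    intro x hx hx1
    refine le_trans (htbd x hx hx1) ?_
    have h1 : (0:ℝ) ≤ |x| ^ N := pow_nonneg (abs_nonneg x) N
    have ha0 : (0:ℝ) < (a:ℝ) := by nlinarith [hβ, hβa1]
    nlinarith
  rcases le_or_gt 0 z with hz0 | hz0
  · exact ⟨t, by rw [htval, habs, abs_of_nonneg hz0], hbd⟩
  · refine ⟨-t, ?_, ?_⟩
    · rw [e3_neg, htval, habs, abs_of_neg hz0, neg_neg]
    · intro x hx hx1
      rw [e3_neg, abs_neg]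
      exact hbd x hx hx1

end triples

set_option maxHeartbeats 1000000 in
lemma exists_L {a b : ℤ} {β : ℝ} (hb : 0 < b) (hba : b < a) (hβ : 1 < β)
    (hroot : β ^ 3 - (a : ℝ) * β ^ 2 - (b : ℝ) * β + 1 = 0)
    (hβa1 : β < (a:ℝ) + 1) :
    ∃ L : ℕ, ∀ x ∈ betaInt β, ∀ y ∈ betaInt β,
      x + y ∈ finBeta β → β ^ L * (x + y) ∈ betaInt β := by
  have hβ0 : (0:ℝ) < β := lt_trans zero_lt_one hβ
  have ha0 : (0:ℝ) < (a:ℝ) := by nlinarith [hβ, hβa1]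
  obtain ⟨γ, hγm, hγroot⟩ := root_gamma hb hba
  obtain ⟨δ, hδm, hδroot⟩ := root_delta hb hba
  have hγ1 : |γ| < 1 := abs_lt.2 ⟨by linarith [hγm.1], hγm.2⟩
  have hδ1 : |δ| < 1 := abs_lt.2 ⟨hδm.1, by linarith [hδm.2]⟩
  have hγ0 : 0 < |γ| := abs_pos.2 (ne_of_gt hγm.1)
  have hδ0 : 0 < |δ| := abs_pos.2 (ne_of_lt hδm.2)
  set Kγ : ℝ := 3 * ((a:ℝ) / (1 - |γ|)) with hKγ
  set Kδ : ℝ := 3 * ((a:ℝ) / (1 - |δ|)) with hKδ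
  have hFfin := finite_F (show δ < γ by linarith [hδm.2, hγm.1])
    (show γ < β by linarith [hγm.2]) Kγ Kδ
  set Q : ℕ := hFfin.toFinset.card with hQ
  refine ⟨Q, ?_⟩
  intro x hx y hy hfin
  by_cases hz0 : x + y = 0
  · rw [hz0, mul_zero]
    refine ⟨0, ?_, ?_⟩
    · rw [abs_zero, pow_zero, div_one]
      exact ⟨le_refl 0, zero_lt_one⟩
    · rw [abs_zero, pow_zero, div_one, Function.iterate_zero, id_eq]
  set z : ℝ := x + y with hzdef
  have hza : 0 < |z| := abs_pos.2 hz0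
  obtain ⟨tx, htxv, htxb⟩ := mem_betaInt_triple hβ hβa1 hroot hx
  obtain ⟨ty, htyv, htyb⟩ := mem_betaInt_triple hβ hβa1 hroot hy
  -- a triple for |z| with conjugate bounds 2a/(1-|x|)
  obtain ⟨tz, htzv, htzb⟩ : ∃ t : ℤ × ℤ × ℤ, e3 β t = |z| ∧
      ∀ w : ℝ, w ^ 3 - (a:ℝ) * w ^ 2 - (b:ℝ) * w + 1 = 0 → |w| < 1 →
        |e3 w t| * (1 - |w|) ≤ 2 * (a:ℝ) := by
    have hsum : e3 β (tx + ty) = z := by rw [e3_add, htxv, htyv]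
    have hsb : ∀ w : ℝ, w ^ 3 - (a:ℝ) * w ^ 2 - (b:ℝ) * w + 1 = 0 → |w| < 1 →
        |e3 w (tx + ty)| * (1 - |w|) ≤ 2 * (a:ℝ) := by
      intro w hw hw1
      have h1 := htxb w hw hw1
      have h2 := htyb w hw hw1
      have h3 : |e3 w (tx + ty)| ≤ |e3 w tx| + |e3 w ty| := by
        rw [e3_add]; exact abs_add_le _ _
      have h4 : (0:ℝ) < 1 - |w| := by linarith [abs_nonneg w]
      nlinarith
    rcases le_or_gt 0 z with h | h
    · exact ⟨tx + ty, by rw [hsum, abs_of_nonneg h], hsb⟩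
    · refine ⟨-(tx + ty), by rw [e3_neg, hsum, abs_of_neg h], ?_⟩
      intro w hw hw1
      rw [e3_neg, abs_neg]
      exact hsb w hw hw1
  -- minimal N₀ with |z| < β^N₀
  have hPex : ∃ N : ℕ, |z| < β ^ N := by
    obtain ⟨N, n, hIco, _⟩ := hfin
    exact ⟨N, (div_lt_one (by positivity)).1 hIco.2⟩
  set N0 : ℕ := Nat.find hPex with hN0def
  have hN0 : |z| < β ^ N0 := Nat.find_spec hPex
  have hup : ∀ j, N0 ≤ j → |z| < β ^ j := fun j hj =>
    lt_of_lt_of_le hN0 (pow_le_pow_right₀ (le_of_lt hβ) hj)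
  -- the orbit
  set v : ℕ → ℝ := fun j => (betaT β)^[j] (|z| / β ^ N0) with hvdef
  have hv0 : v 0 = |z| / β ^ N0 := rfl
  have hvs : ∀ j, v (j + 1) = betaT β (v j) := fun j => Function.iterate_succ_apply' _ _ _
  have hvIco : ∀ j, v j ∈ Set.Ico (0:ℝ) 1 := by
    intro j
    induction j with
    | zero =>
      rw [hv0]
      exact ⟨by positivity, (div_lt_one (by positivity)).2 hN0⟩
    | succ j _ => rw [hvs]; exact betaT_mem_Ico _ _
  -- triples along the orbit
  obtain ⟨ts, hts0, htss⟩ : ∃ ts : ℕ → ℤ × ℤ × ℤ, ts 0 = (divT a b)^[N0] tz ∧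
      ∀ j, ts (j + 1) = mulT a b (ts j) - (⌊β * v j⌋, 0, 0) :=
    ⟨fun n => Nat.rec ((divT a b)^[N0] tz) (fun j t => mulT a b t - (⌊β * v j⌋, 0, 0)) n,
      rfl, fun j => rfl⟩
  have hval : ∀ j, e3 β (ts j) = v j := by
    intro j
    induction j with
    | zero =>
      rw [hts0, e3_divT_iter hroot (ne_of_gt hβ0), htzv, hv0]
    | succ j ih =>
      rw [htss, e3_sub_d, e3_mulT hroot, ih, hvs]
      rfl
  -- conjugate bounds along the orbit
  have hinv : ∀ w : ℝ, w ^ 3 - (a:ℝ) * w ^ 2 - (b:ℝ) * w + 1 = 0 → |w| < 1 → 0 < |w| →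
      ∀ j, |e3 w (ts j)| ≤ 2 * ((a:ℝ) / (1 - |w|)) * |w| ^ ((j:ℤ) - (N0:ℤ)) + (a:ℝ) / (1 - |w|) := by
    intro w hw hw1 hw0
    have hw1' : (0:ℝ) < 1 - |w| := by linarith
    have hwne : w ≠ 0 := fun h => by simp [h] at hw0
    set C : ℝ := (a:ℝ) / (1 - |w|) with hC
    have hC0 : 0 < C := by positivity
    intro j
    induction j with
    | zero =>
      rw [hts0, e3_divT_iter hw hwne, abs_div, abs_pow, Nat.cast_zero]
      have h1 : |e3 w tz| ≤ 2 * C := by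
        rw [hC, mul_div_assoc']
        rw [le_div_iff₀ hw1']
        exact htzb w hw hw1
      have h2 : |w| ^ ((0:ℤ) - (N0:ℤ)) = (|w| ^ (N0:ℕ))⁻¹ := by
        rw [zero_sub, zpow_neg, zpow_natCast]
      rw [h2]
      have h3 : (0:ℝ) < |w| ^ (N0:ℕ) := pow_pos hw0 _
      have h4 : |e3 w tz| / |w| ^ (N0:ℕ) ≤ 2 * C * (|w| ^ (N0:ℕ))⁻¹ := by
        rw [div_eq_mul_inv]
        exact mul_le_mul_of_nonneg_right h1 (by positivity)
      linarith
    | succ j ih =>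
      have hdig := digit_bounds hβ0 hβa1 (hvIco j)
      set d : ℤ := ⌊β * v j⌋ with hd
      have h1 : |e3 w (ts (j+1))| ≤ |w| * |e3 w (ts j)| + (a:ℝ) := by
        rw [htss, e3_sub_d, e3_mulT hw]
        refine le_trans (abs_sub _ _) ?_
        rw [abs_mul]
        have : |(d:ℝ)| = (d:ℝ) := abs_of_nonneg (by exact_mod_cast hdig.1)
        rw [this]
        linarith [hdig.2]
      have h2 : |w| * |e3 w (ts j)| ≤ |w| * (2 * C * |w| ^ ((j:ℤ) - (N0:ℤ)) + C) :=
        mul_le_mul_of_nonneg_left ih (abs_nonneg w)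
      have h3 : |w| * (2 * C * |w| ^ ((j:ℤ) - (N0:ℤ)) + C)
          = 2 * C * |w| ^ (((j+1:ℕ):ℤ) - (N0:ℤ)) + |w| * C := by
        have : |w| ^ (((j+1:ℕ):ℤ) - (N0:ℤ)) = |w| ^ ((j:ℤ) - (N0:ℤ)) * |w| := by
          rw [← zpow_add_one₀ (ne_of_gt hw0)]
          congr 1
          push_cast
          ring
        rw [this]
        ring
      have h4 : |w| * C + (a:ℝ) = C := by
        rw [hC]
        field_simp
        ring
      calc |e3 w (ts (j+1))| ≤ |w| * |e3 w (ts j)| + (a:ℝ) := h1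
        _ ≤ |w| * (2 * C * |w| ^ ((j:ℤ) - (N0:ℤ)) + C) + (a:ℝ) := by linarith
        _ = 2 * C * |w| ^ (((j+1:ℕ):ℤ) - (N0:ℤ)) + (|w| * C + (a:ℝ)) := by rw [h3]; ring
        _ = 2 * C * |w| ^ (((j+1:ℕ):ℤ) - (N0:ℤ)) + C := by rw [h4]
  -- membership of orbit points in the finite set
  have hmemF : ∀ j, N0 ≤ j → v j ∈ {v : ℝ | ∃ t : ℤ × ℤ × ℤ,
      e3 β t = v ∧ |v| ≤ 1 ∧ |e3 γ t| ≤ Kγ ∧ |e3 δ t| ≤ Kδ} := by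
    intro j hj
    refine ⟨ts j, hval j, ?_, ?_, ?_⟩
    · have := hvIco j
      rw [abs_of_nonneg this.1]
      exact le_of_lt this.2
    · -- γ bound
      refine le_trans (hinv γ hγroot hγ1 hγ0 j) ?_
      have hC0 : (0:ℝ) < (a:ℝ) / (1 - |γ|) := by
        have : (0:ℝ) < 1 - |γ| := by linarith
        positivity
      obtain ⟨k, hk⟩ : ∃ k : ℕ, (j:ℤ) - (N0:ℤ) = (k:ℤ) := ⟨j - N0, by omega⟩
      rw [hk, zpow_natCast, hKγ]
      have hle1 : |γ| ^ k ≤ 1 := pow_le_one₀ (abs_nonneg γ) (le_of_lt hγ1)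
      have h2 := mul_le_mul_of_nonneg_left hle1
        (by positivity : (0:ℝ) ≤ 2 * ((a:ℝ) / (1 - |γ|)))
      linarith
    · -- δ bound
      refine le_trans (hinv δ hδroot hδ1 hδ0 j) ?_
      have hC0 : (0:ℝ) < (a:ℝ) / (1 - |δ|) := by
        have : (0:ℝ) < 1 - |δ| := by linarith
        positivity
      obtain ⟨k, hk⟩ : ∃ k : ℕ, (j:ℤ) - (N0:ℤ) = (k:ℤ) := ⟨j - N0, by omega⟩
      rw [hk, zpow_natCast, hKδ]
      have hle1 : |δ| ^ k ≤ 1 := pow_le_one₀ (abs_nonneg δ) (le_of_lt hδ1)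
      have h2 := mul_le_mul_of_nonneg_left hle1
        (by positivity : (0:ℝ) ≤ 2 * ((a:ℝ) / (1 - |δ|)))
      linarith
  -- the orbit hits 0
  have hhit : ∃ m, v m = 0 := by
    obtain ⟨N, n, hIco, hit⟩ := hfin
    have hNN0 : N0 ≤ N := Nat.find_min' hPex ((div_lt_one (by positivity)).1 hIco.2)
    rcases lt_or_ge n (N - N0) with h | h
    · exfalso
      have := climb hβ (abs_nonneg z) hup n N (by omega)
      rw [this] at hit
      have hpow : (0:ℝ) < β ^ (N - n) := by positivity
      rw [_root_.div_eq_zero_iff] at hit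
      rcases hit with h' | h'
      · exact (ne_of_gt hza) h'
      · linarith
    · refine ⟨n - (N - N0), ?_⟩
      have hclimb := climb hβ (abs_nonneg z) hup (N - N0) N (by omega)
      rw [show N - (N - N0) = N0 by omega] at hclimb
      have : (betaT β)^[n] (|z| / β ^ N)
          = (betaT β)^[n - (N - N0)] ((betaT β)^[N - N0] (|z| / β ^ N)) := by
        rw [← Function.iterate_add_apply]
        congr 1
        omega
      rw [this, hclimb] at hit
      exact hit
  set m0 : ℕ := Nat.find hhit with hm0def
  have hm0 : v m0 = 0 := Nat.find_spec hhit
  -- pigeonhole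
  obtain ⟨i, j', hij, heq⟩ : ∃ i j' : Fin (Q + 1), (i:ℕ) < (j':ℕ) ∧ v (N0 + i) = v (N0 + j') := by
    have hmaps : ∀ i : Fin (Q + 1), i ∈ (Finset.univ : Finset (Fin (Q+1))) →
        v (N0 + i) ∈ hFfin.toFinset := by
      intro i _
      rw [Set.Finite.mem_toFinset]
      exact hmemF _ (Nat.le_add_right _ _)
    have hcard : hFfin.toFinset.card < (Finset.univ : Finset (Fin (Q+1))).card := by
      rw [Finset.card_univ, Fintype.card_fin]
      omega
    obtain ⟨i, _, j', _, hne, heq⟩ :=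
      Finset.exists_ne_map_eq_of_card_lt_of_maps_to hcard hmaps
    rcases lt_or_gt_of_ne hne with h | h
    · exact ⟨i, j', h, heq⟩
    · exact ⟨j', i, h, heq.symm⟩
  set p : ℕ := (j':ℕ) - (i:ℕ) with hpdef
  have hp1 : 1 ≤ p := by omega
  have hper : ∀ k, v (N0 + i + k + p) = v (N0 + i + k) := by
    intro k
    induction k with
    | zero =>
      have : N0 + (i:ℕ) + 0 + p = N0 + (j':ℕ) := by omega
      rw [this]
      simpa using heq.symm
    | succ k ih =>
      have e1 : N0 + (i:ℕ) + (k+1) + p = (N0 + (i:ℕ) + k + p) + 1 := by omega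
      have e2 : N0 + (i:ℕ) + (k+1) = (N0 + (i:ℕ) + k) + 1 := by omega
      rw [e1, e2, hvs, hvs, ih]
  have hm0le : m0 ≤ N0 + Q := by
    by_contra hcon
    push_neg at hcon
    have hj'Q : (j':ℕ) ≤ Q := Nat.lt_succ_iff.1 j'.isLt
    have hge : N0 + (i:ℕ) + p ≤ m0 := by omega
    have hk : v (m0 - p) = 0 := by
      have := hper (m0 - p - (N0 + i))
      rw [show N0 + (i:ℕ) + (m0 - p - (N0 + (i:ℕ))) + p = m0 by omega,
        show N0 + (i:ℕ) + (m0 - p - (N0 + (i:ℕ))) = m0 - p by omega] at this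
      rw [← this, hm0]
    exact Nat.find_min hhit (show m0 - p < m0 by omega) hk
  -- conclusion
  refine ⟨N0 + Q, ?_, ?_⟩
  · have habs : |β ^ Q * z| / β ^ (N0 + Q) = |z| / β ^ N0 := by
      rw [abs_mul, abs_pow, abs_of_pos hβ0, pow_add]
      field_simp
    rw [habs]
    exact ⟨by positivity, (div_lt_one (by positivity)).2 hN0⟩
  · have habs : |β ^ Q * z| / β ^ (N0 + Q) = |z| / β ^ N0 := by
      rw [abs_mul, abs_pow, abs_of_pos hβ0, pow_add]
      field_simp
    rw [habs]
    exact betaT_iter_absorb hm0 hm0le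


section examplepair
variable {a b : ℤ} {β : ℝ}

lemma example_pair (hb : 0 < b) (hba : b < a) (hβ : 1 < β)
    (hroot : β ^ 3 - (a : ℝ) * β ^ 2 - (b : ℝ) * β + 1 = 0)
    (hab : (a:ℝ) < β) :
    (b:ℝ) ∈ betaInt β ∧ (a:ℝ) * β ∈ betaInt β ∧
    ((a:ℝ) * β + b) ∈ finBeta β ∧ ((a:ℝ) * β + b) ∉ betaInt β := by
  have hβ0 : (0:ℝ) < β := lt_trans zero_lt_one hβ
  have hβne : β ≠ 0 := ne_of_gt hβ0
  have hbR : (0:ℝ) < b := by exact_mod_cast hb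
  have hbβ : (b:ℝ) < β := by
    have : (b:ℝ) < a := by exact_mod_cast hba
    linarith
  have haR : (0:ℝ) < a := by
    have : (0:ℤ) < a := lt_trans hb hba
    exact_mod_cast this
  have h2a : (2:ℝ) ≤ a := by
    have : (2:ℤ) ≤ a := by omega
    exact_mod_cast this
  have h2β : (2:ℝ) < β := lt_of_le_of_lt h2a hab
  have hz : (a:ℝ) * β + b = β ^ 2 + 1 / β := by
    field_simp
    nlinarith [hroot]
  set z : ℝ := (a:ℝ) * β + b with hzdef
  have hz0 : 0 < z := by positivity
  have hzb2 : β ^ 2 < z := by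
    rw [hz]
    have : 0 < 1/β := by positivity
    linarith
  have hzb3 : z < β ^ 3 := by
    rw [hz]
    have h1 : 1/β < 1 := by rw [div_lt_one hβ0]; exact hβ
    nlinarith [h1, h2β, mul_pos hβ0 hβ0]
  have e1 : betaT β (z / β ^ 3) = 1 / β ^ 3 := by
    have hm : β * (z / β ^ 3) = 1 + 1 / β ^ 3 := by
      rw [hz]; field_simp
    have hfr : Int.fract ((1:ℝ) + 1 / β ^ 3) = Int.fract (1 / β ^ 3) := by
      rw [show (1:ℝ) + 1 / β ^ 3 = ((1:ℤ):ℝ) + 1 / β ^ 3 by norm_num]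
      exact Int.fract_intCast_add _ _
    rw [betaT_eq_fract, hm, hfr, Int.fract_eq_self]
    refine ⟨by positivity, ?_⟩
    rw [div_lt_one (by positivity)]
    exact one_lt_pow₀ hβ (by norm_num)
  have epow : ∀ k : ℕ, 2 ≤ k → betaT β (1 / β ^ k) = 1 / β ^ (k - 1) := by
    intro k hk
    have hm : β * (1 / β ^ k) = 1 / β ^ (k - 1) := by
      rw [eq_div_iff (by positivity), show β ^ k = β ^ (k-1) * β by
        rw [← pow_succ]; congr 1; omega]
      field_simp
    rw [betaT_eq_fract, hm, Int.fract_eq_self]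
    refine ⟨by positivity, ?_⟩
    rw [div_lt_one (by positivity)]
    exact one_lt_pow₀ hβ (by omega)
  have e4 : betaT β (1 / β ^ 1) = 0 := by
    rw [betaT_eq_fract, pow_one, mul_one_div, div_self hβne, Int.fract_one]
  have eorb : (betaT β)^[4] (z / β ^ 3) = 0 := by
    have h4 : (betaT β)^[4] (z / β ^ 3)
        = betaT β (betaT β (betaT β (betaT β (z / β ^ 3)))) := by
      rw [show (4:ℕ) = 1+1+1+1 from rfl]
      simp [Function.iterate_add_apply]
    rw [h4, e1, epow 3 (by norm_num), epow 2 (by norm_num)]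
    exact e4
  have eorb3 : (betaT β)^[3] (z / β ^ 3) = 1 / β := by
    have h3 : (betaT β)^[3] (z / β ^ 3)
        = betaT β (betaT β (betaT β (z / β ^ 3))) := by
      rw [show (3:ℕ) = 1+1+1 from rfl]
      simp [Function.iterate_add_apply]
    rw [h3, e1, epow 3 (by norm_num), epow 2 (by norm_num)]
    norm_num
  refine ⟨⟨1, ⟨by positivity, ?_⟩, ?_⟩, ⟨2, ⟨by positivity, ?_⟩, ?_⟩,
    ⟨3, 4, ⟨by positivity, ?_⟩, ?_⟩, ?_⟩
  · rw [abs_of_pos hbR, div_lt_one (by positivity), pow_one]; exact hbβ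
  · rw [Function.iterate_one, betaT_eq_fract, abs_of_pos hbR, pow_one,
      mul_div_cancel₀ _ hβne, Int.fract_intCast]
  · rw [abs_of_pos (by positivity : (0:ℝ) < (a:ℝ)*β), div_lt_one (by positivity)]
    nlinarith
  · have h1 : |(a:ℝ) * β| / β ^ 2 = (a:ℝ) / β := by
      rw [abs_of_pos (by positivity)]
      field_simp
    rw [h1]
    have h2 : betaT β ((a:ℝ)/β) = 0 := by
      rw [betaT_eq_fract, mul_div_cancel₀ _ hβne, Int.fract_intCast]
    rw [show (2:ℕ) = 1+1 from rfl, Function.iterate_add_apply, Function.iterate_one, h2]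
    rw [betaT_eq_fract, mul_zero, Int.fract_zero]
  · rw [abs_of_pos hz0, div_lt_one (by positivity)]
    exact hzb3
  · rw [abs_of_pos hz0]; exact eorb
  · rintro ⟨N, ⟨-, hlt⟩, hiter⟩
    rw [abs_of_pos hz0] at hlt hiter
    by_cases hN : N ≤ 2
    · have : β ^ N ≤ β ^ 2 := pow_le_pow_right₀ (le_of_lt hβ) hN
      rw [div_lt_one (by positivity)] at hlt
      linarith
    · push_neg at hN
      have hm : ∀ j, 3 ≤ j → z < β ^ j := fun j hj =>
        lt_of_lt_of_le hzb3 (pow_le_pow_right₀ (le_of_lt hβ) hj)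
      have hclimb := climb hβ (le_of_lt hz0) hm (N - 3) N (by omega)
      rw [show N - (N - 3) = 3 by omega] at hclimb
      have : (betaT β)^[N] (z / β ^ N) = 1 / β := by
        have h35 : (betaT β)^[N] (z / β ^ N)
            = (betaT β)^[3] ((betaT β)^[N - 3] (z / β ^ N)) := by
          rw [← Function.iterate_add_apply]
          congr 1
          omega
        rw [h35, hclimb, eorb3]
      rw [this] at hiter
      have : (0:ℝ) < 1/β := by positivity
      linarith [hiter]

end examplepair
end Stmt5aux

theorem stmt5 (a b : ℤ) (hb : 0 < b) (hba : b < a) (β : ℝ) (hβ : 1 < β)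
    (hroot : β ^ 3 - (a : ℝ) * β ^ 2 - (b : ℝ) * β + 1 = 0) :
    1 ≤ Lplus β ∧
    ∃ x ∈ betaInt β, ∃ y ∈ betaInt β, x + y ∈ finBeta β ∧ x + y ∉ betaInt β := by
  have hβa : (a:ℝ) < β := Stmt5aux.beta_gt_a hb hβ hroot
  have hβa1 : β < (a:ℝ) + 1 := Stmt5aux.beta_lt_a1 hb hba hβ hroot
  obtain ⟨hbInt, haInt, hfinz, hnotz⟩ := Stmt5aux.example_pair hb hba hβ hroot hβa
  constructor
  · rw [Lplus]
    have hne : {L : ℕ | ∀ x ∈ betaInt β, ∀ y ∈ betaInt β,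
        x + y ∈ finBeta β → β ^ L * (x + y) ∈ betaInt β}.Nonempty := by
      obtain ⟨L, hL⟩ := Stmt5aux.exists_L hb hba hβ hroot hβa1
      exact ⟨L, hL⟩
    rw [Nat.one_le_iff_ne_zero]
    intro h0
    rw [Nat.sInf_eq_zero] at h0
    rcases h0 with h0 | h0
    · have := h0 ((a:ℝ)*β) haInt (b:ℝ) hbInt hfinz
      rw [pow_zero, one_mul] at this
      exact hnotz this
    · rw [h0] at hne
      exact Set.not_nonempty_empty hne
  · exact ⟨(a:ℝ)*β, haInt, (b:ℝ), hbInt, hfinz, hnotz⟩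
end

section
/- Let z ≥ 1 be an integer and let a be an integer with a ≥ 4(z+2)^2. Let β be the unique real root greater than 1 of the polynomial P(X) = X^3 − aX^2 − (a−z)X + 1. Then L_⊕(β) = 1. -/
open Polynomial

/-! ### Auxiliary definitions and lemmas -/

noncomputable def dig (β u : ℝ) (j : ℕ) : ℤ := ⌊β * (betaT β)^[j] u⌋

noncomputable def digP (β u : ℝ) : ℕ → Polynomial ℤ
  | 0 => 0
  | k+1 => X * digP β u k + C (dig β u k)

lemma betaT_mem (β x : ℝ) : betaT β x ∈ Set.Ico (0:ℝ) 1 := by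
  have : betaT β x = Int.fract (β * x) := rfl
  rw [this]
  exact ⟨Int.fract_nonneg _, Int.fract_lt_one _⟩

lemma iter_mem_s10 (β : ℝ) {u : ℝ} (hu : u ∈ Set.Ico (0:ℝ) 1) (j : ℕ) :
    (betaT β)^[j] u ∈ Set.Ico (0:ℝ) 1 := by
  cases j with
  | zero => simpa using hu
  | succ k => rw [Function.iterate_succ_apply']; exact betaT_mem β _

lemma dig_nonneg (β : ℝ) (hβ : 0 < β) {u : ℝ} (hu : u ∈ Set.Ico (0:ℝ) 1) (j : ℕ) :
    0 ≤ dig β u j := by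
  have h := iter_mem_s10 β hu j
  exact Int.floor_nonneg.mpr (mul_nonneg hβ.le h.1)

lemma dig_le (β : ℝ) {a : ℤ} (hβ : 0 < β) (hβa : β < (a:ℝ) + 1) {u : ℝ}
    (hu : u ∈ Set.Ico (0:ℝ) 1) (j : ℕ) : dig β u j ≤ a := by
  have h := iter_mem_s10 β hu j
  have h1 : β * (betaT β)^[j] u < (a:ℝ) + 1 := by
    nlinarith [h.1, h.2]
  have h2 : dig β u j < a + 1 := by
    unfold dig
    have : (β * (betaT β)^[j] u) < ((a + 1 : ℤ) : ℝ) := by push_cast; linarith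
    exact Int.floor_lt.mpr this
  omega

lemma digP_eval (β u : ℝ) (k : ℕ) :
    β ^ k * u = (aeval β (digP β u k) : ℝ) + (betaT β)^[k] u := by
  induction k with
  | zero => simp [digP]
  | succ k ih =>
    have hit : (betaT β)^[k+1] u
        = β * (betaT β)^[k] u - (dig β u k : ℝ) := by
      rw [Function.iterate_succ_apply']
      rfl
    have : β ^ (k+1) * u = β * (β ^ k * u) := by ring
    rw [this, ih]
    simp only [digP, map_add, map_mul, aeval_X, aeval_C]
    rw [hit]
    push_cast [algebraMap_int_eq, eq_intCast]
    ring

-- given digit bounds, eval at γ ∈ [0,1) is in [0, a/(1-γ)]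
lemma digP_eval_nonneg (β u : ℝ) {γ : ℝ} (hγ0 : 0 ≤ γ)
    (hd : ∀ j, 0 ≤ dig β u j) (k : ℕ) :
    0 ≤ (aeval γ (digP β u k) : ℝ) := by
  induction k with
  | zero => simp [digP]
  | succ k ih =>
    simp only [digP, map_add, map_mul, aeval_X, aeval_C, algebraMap_int_eq, eq_intCast, map_intCast]
    have h2 : (0:ℝ) ≤ (dig β u k : ℝ) := by exact_mod_cast hd k
    positivity

lemma digP_eval_le (β u : ℝ) {a : ℤ} {γ : ℝ} (hγ0 : 0 ≤ γ) (hγ1 : γ < 1)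
    (hd0 : ∀ j, 0 ≤ dig β u j) (hd : ∀ j, dig β u j ≤ a) (k : ℕ) :
    (1 - γ) * (aeval γ (digP β u k) : ℝ) ≤ (a : ℝ) := by
  have ha : (0:ℝ) ≤ (a:ℝ) := by
    have h1 := hd0 0
    have h2 := hd 0
    exact_mod_cast le_trans h1 h2
  induction k with
  | zero => simpa [digP] using ha
  | succ k ih =>
    have hnn := digP_eval_nonneg β u hγ0 hd0 k
    have hdk : (dig β u k : ℝ) ≤ (a:ℝ) := by exact_mod_cast hd k
    simp only [digP, map_add, map_mul, aeval_X, aeval_C, algebraMap_int_eq, eq_intCast, map_intCast]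
    nlinarith

lemma digP_eval_const_le (β u : ℝ) {γ : ℝ} (hγ0 : 0 ≤ γ)
    (hd : ∀ j, 0 ≤ dig β u j) (k : ℕ) :
    (dig β u k : ℝ) ≤ (aeval γ (digP β u (k+1)) : ℝ) := by
  have hnn := digP_eval_nonneg β u hγ0 hd k
  simp only [digP, map_add, map_mul, aeval_X, aeval_C, algebraMap_int_eq, eq_intCast, map_intCast]
  nlinarith

lemma int_facts (z a : ℤ) (hz : 1 ≤ z) (ha : 4*(z+2)^2 ≤ a) :
    36 ≤ a ∧ z + 1 ≤ a ∧ 32*z ≤ a := by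
  refine ⟨by nlinarith, by nlinarith, by nlinarith [sq_nonneg (z-2)]⟩

lemma beta_loc (z a : ℤ) (hz : 1 ≤ z) (ha : 4*(z+2)^2 ≤ a) (β : ℝ) (hβ : 1 < β)
    (hroot : β ^ 3 - (a : ℝ) * β ^ 2 - ((a : ℝ) - (z : ℝ)) * β + 1 = 0) :
    (a:ℝ) < β ∧ β < (a:ℝ) + 1 := by
  obtain ⟨h36, hza, h32⟩ := int_facts z a hz ha
  have hA : (36:ℝ) ≤ (a:ℝ) := by exact_mod_cast h36
  have hAZ : (1:ℝ) ≤ (a:ℝ) - (z:ℝ) := by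
    have h' : ((z:ℝ)) + 1 ≤ (a:ℝ) := by exact_mod_cast hza
    linarith
  have h1 : (β - (a:ℝ)) * β^2 = ((a:ℝ)-(z:ℝ))*β - 1 := by linear_combination hroot
  have h2 : (0:ℝ) < ((a:ℝ)-(z:ℝ))*β - 1 := by nlinarith
  have hβ2 : (0:ℝ) < β^2 := by positivity
  have haβ : (a:ℝ) < β := by nlinarith
  refine ⟨haβ, ?_⟩
  have hZr : (1:ℝ) ≤ (z:ℝ) := by exact_mod_cast hz
  have hβpos : (0:ℝ) < β := by linarith
  nlinarith [mul_lt_mul_of_pos_right haβ hβpos]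

lemma gamma_exists (z a : ℤ) (hz : 1 ≤ z) (ha : 4*(z+2)^2 ≤ a) :
    ∃ γ : ℝ, 0 < γ ∧ γ ≤ 2/(a:ℝ) ∧
      γ ^ 3 - (a : ℝ) * γ ^ 2 - ((a : ℝ) - (z : ℝ)) * γ + 1 = 0 := by
  obtain ⟨h36, hza, h32⟩ := int_facts z a hz ha
  have hA : (36:ℝ) ≤ (a:ℝ) := by exact_mod_cast h36
  have hApos : (0:ℝ) < (a:ℝ) := by linarith
  have hZ : (1:ℝ) ≤ (z:ℝ) := by exact_mod_cast hz
  have h32' : 32*(z:ℝ) ≤ (a:ℝ) := by exact_mod_cast h32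
  set f : ℝ → ℝ := fun t => t^3 - (a:ℝ)*t^2 - ((a:ℝ)-(z:ℝ))*t + 1 with hf
  have hcont : ContinuousOn f (Set.Icc 0 (2/(a:ℝ))) := by
    apply Continuous.continuousOn; unfold f; continuity
  have hle : (0:ℝ) ≤ 2/(a:ℝ) := by positivity
  have hfb : f (2/(a:ℝ)) < 0 := by
    show (2/(a:ℝ))^3 - (a:ℝ)*(2/(a:ℝ))^2 - ((a:ℝ)-(z:ℝ))*(2/(a:ℝ)) + 1 < 0
    have e1 : (2/(a:ℝ))^3 = 8/(a:ℝ)^3 := by ring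
    have e2 : (a:ℝ)*(2/(a:ℝ))^2 = 4/(a:ℝ) := by field_simp; ring
    have e3 : ((a:ℝ)-(z:ℝ))*(2/(a:ℝ)) = 2 - 2*(z:ℝ)/(a:ℝ) := by field_simp
    rw [e1, e2, e3]
    have b1 : 8/(a:ℝ)^3 ≤ 8/36^3 := by
      apply div_le_div_of_nonneg_left (by norm_num) (by norm_num)
      nlinarith [sq_nonneg ((a:ℝ) - 36), sq_nonneg ((a:ℝ) + 36)]
    have b2 : 2*(z:ℝ)/(a:ℝ) ≤ 1/16 := by
      rw [div_le_div_iff₀ hApos (by norm_num)]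
      nlinarith
    have b3 : (0:ℝ) ≤ 4/(a:ℝ) := by positivity
    nlinarith
  have h0 : (0:ℝ) ∈ Set.Icc (f (2/(a:ℝ))) (f 0) := by
    constructor
    · linarith
    · unfold f; norm_num
  have := intermediate_value_Icc' hle hcont h0
  obtain ⟨γ, hγmem, hγeq⟩ := this
  have hγeq' : γ ^ 3 - (a : ℝ) * γ ^ 2 - ((a : ℝ) - (z : ℝ)) * γ + 1 = 0 := hγeq
  refine ⟨γ, ?_, hγmem.2, hγeq'⟩
  rcases lt_or_eq_of_le hγmem.1 with h | h
  · exact h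
  · exfalso
    rw [← h] at hγeq'
    norm_num at hγeq'

lemma conj_eval (z a : ℤ) (hz : 1 ≤ z) (ha : 4*(z+2)^2 ≤ a) (β γ : ℝ)
    (hβroot : β^3 - (a:ℝ)*β^2 - ((a:ℝ)-(z:ℝ))*β + 1 = 0)
    (hγroot : γ^3 - (a:ℝ)*γ^2 - ((a:ℝ)-(z:ℝ))*γ + 1 = 0)
    (Q : Polynomial ℤ) (hQ : (aeval β Q : ℝ) = 0) : (aeval γ Q : ℝ) = 0 := by
  have ha36 : 36 ≤ a := by nlinarith
  set Pz : Polynomial ℤ := X^3 - C a * X^2 - C (a-z) * X + 1 with hPz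
  have hmonic : Pz.Monic := by
    unfold Pz
    monicity!
  have hPzeval : ∀ t : ℝ, (aeval t Pz : ℝ) = t^3 - (a:ℝ)*t^2 - ((a:ℝ)-(z:ℝ))*t + 1 := by
    intro t
    simp [hPz]
  set Pq : Polynomial ℚ := Pz.map (algebraMap ℤ ℚ) with hPq
  have hPqmonic : Pq.Monic := hmonic.map _
  have hdegz : Pz.natDegree = 3 := by
    unfold Pz
    compute_degree!
  have hdeg : Pq.natDegree = 3 := by
    rw [hPq, hmonic.natDegree_map]; exact hdegz
  have hirr : Irreducible Pq := by
    rw [Polynomial.irreducible_iff_roots_eq_zero_of_degree_le_three (by omega) (by omega)]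
    by_contra h
    obtain ⟨r, hr⟩ := Multiset.exists_mem_of_ne_zero h
    rw [mem_roots hPqmonic.ne_zero] at hr
    have hroot : aeval r Pz = 0 := by
      rw [aeval_def, ← eval_map]
      exact hr
    have hint : IsIntegral ℤ r := ⟨Pz, hmonic, by rwa [← aeval_def]⟩
    obtain ⟨k, hk⟩ := IsIntegrallyClosed.isIntegral_iff.mp hint
    have hcast : ((aeval k Pz : ℤ) : ℚ) = 0 := by
      have h3 : algebraMap ℤ ℚ ((aeval k) Pz) = 0 := by
        rw [← aeval_algebraMap_apply, hk]; exact hroot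
      simpa [algebraMap_int_eq] using h3
    have heval : (aeval k Pz : ℤ) = 0 := by exact_mod_cast hcast
    have hke : k^3 - a*k^2 - (a-z)*k + 1 = 0 := by
      have h2 : (aeval k Pz : ℤ) = k^3 - a*k^2 - (a-z)*k + 1 := by simp [hPz]
      rw [h2] at heval; exact heval
    have hdvd : k ∣ 1 := ⟨a*k + (a - z) - k^2, by linear_combination hke⟩
    have := isUnit_of_dvd_one hdvd
    rw [Int.isUnit_iff] at this
    rcases this with h1 | h1 <;> rw [h1] at hke <;> nlinarith
  have hβPq : (aeval β Pq : ℝ) = 0 := by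
    rw [hPq, aeval_map_algebraMap, hPzeval]; exact hβroot
  have hmin : minpoly ℚ β = Pq :=
    (minpoly.eq_of_irreducible_of_monic hirr hβPq hPqmonic).symm
  have hQq : (aeval β (Q.map (algebraMap ℤ ℚ)) : ℝ) = 0 := by
    rwa [aeval_map_algebraMap]
  have hdvd : Pq ∣ Q.map (algebraMap ℤ ℚ) := hmin ▸ minpoly.dvd ℚ β hQq
  obtain ⟨R, hR⟩ := hdvd
  have : (aeval γ (Q.map (algebraMap ℤ ℚ)) : ℝ) = 0 := by
    rw [hR, map_mul]
    have : (aeval γ Pq : ℝ) = 0 := by rw [hPq, aeval_map_algebraMap, hPzeval]; exact hγroot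
    rw [this, zero_mul]
  rwa [aeval_map_algebraMap] at this

lemma sign_abs (x : ℝ) : ∃ s : ℤ, (s = 1 ∨ s = -1) ∧ (s:ℝ) * |x| = x := by
  rcases le_or_gt 0 x with h | h
  · exact ⟨1, Or.inl rfl, by rw [abs_of_nonneg h]; ring⟩
  · exact ⟨-1, Or.inr rfl, by rw [abs_of_neg h]; push_cast; ring⟩

lemma up_lemma (z a : ℤ) (hz : 1 ≤ z) (ha : 4*(z+2)^2 ≤ a) (β : ℝ) (hβ : 1 < β)
    (hroot : β ^ 3 - (a : ℝ) * β ^ 2 - ((a : ℝ) - (z : ℝ)) * β + 1 = 0) :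
    ∀ x ∈ betaInt β, ∀ y ∈ betaInt β, x + y ∈ finBeta β → β ^ 1 * (x + y) ∈ betaInt β := by
  classical
  intro x hx y hy hs
  have hβ0 : (0:ℝ) < β := lt_trans one_pos hβ
  have hβne : β ≠ 0 := ne_of_gt hβ0
  have hT0 : betaT β 0 = 0 := by simp [betaT]
  by_cases h0 : x + y = 0
  · rw [h0, mul_zero]
    exact ⟨0, by norm_num, by norm_num⟩
  obtain ⟨N', n', hvIco, hvT⟩ := hs
  set v := |x + y| / β ^ N' with hv
  have hex : ∃ n, (betaT β)^[n] v = 0 := ⟨n', hvT⟩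
  set n := Nat.find hex with hndef
  have hnT : (betaT β)^[n] v = 0 := Nat.find_spec hex
  by_cases hcase : n ≤ N' + 1
  · have habs : |β ^ 1 * (x + y)| / β ^ (N' + 2) = v / β := by
      rw [abs_mul, abs_pow, abs_of_pos hβ0, hv]
      field_simp
      ring
    refine ⟨N' + 2, ?_, ?_⟩
    · rw [habs]
      constructor
      · exact div_nonneg hvIco.1 hβ0.le
      · rw [div_lt_one hβ0]
        exact lt_trans hvIco.2 hβ
    · rw [habs]
      have h1 : betaT β (v/β) = v := by
        unfold betaT
        have e : β * (v/β) = v := by field_simp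
        rw [e, Int.floor_eq_zero_iff.mpr hvIco]
        simp
      rw [show N' + 2 = (N'+1)+1 from rfl, Function.iterate_succ_apply, h1]
      rw [show N' + 1 = (N'+1-n)+n from by omega, Function.iterate_add_apply, hnT]
      exact Function.iterate_fixed hT0 _
  · exfalso
    push_neg at hcase
    obtain ⟨h36, hza, h32⟩ := int_facts z a hz ha
    have hA : (36:ℝ) ≤ (a:ℝ) := by exact_mod_cast h36
    have hApos : (0:ℝ) < (a:ℝ) := by linarith
    obtain ⟨haβ, hβa1⟩ := beta_loc z a hz ha β hβ hroot
    obtain ⟨γ, hγ0, hγle, hγroot⟩ := gamma_exists z a hz ha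
    have hγ18 : γ ≤ 1/18 := by
      refine le_trans hγle ?_
      rw [div_le_div_iff₀ hApos (by norm_num)]
      linarith
    have hγ1 : γ < 1 := by linarith
    have hγA : γ * (a:ℝ) ≤ 2 := by
      rw [← le_div_iff₀ hApos]
      exact hγle
    -- digit expansions of |x| and |y|
    obtain ⟨N1, hu1, hu1T⟩ := hx
    obtain ⟨N2, hu2, hu2T⟩ := hy
    set u1 := |x| / β ^ N1 with hu1d
    set u2 := |y| / β ^ N2 with hu2d
    have hxrep : (aeval β (digP β u1 N1) : ℝ) = |x| := by
      have hid := digP_eval β u1 N1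
      rw [hu1T, add_zero] at hid
      rw [← hid, hu1d]
      field_simp
    have hyrep : (aeval β (digP β u2 N2) : ℝ) = |y| := by
      have hid := digP_eval β u2 N2
      rw [hu2T, add_zero] at hid
      rw [← hid, hu2d]
      field_simp
    set K := n - N' with hK
    have hK2 : 2 ≤ K := by omega
    have hvrep : (aeval β (digP β v n) : ℝ) = β ^ K * |x + y| := by
      have hid := digP_eval β v n
      rw [hnT, add_zero] at hid
      rw [← hid, hv]
      rw [show n = K + N' from by omega, pow_add]
      field_simp
    -- signs
    obtain ⟨sx, hsxv, hsx⟩ := sign_abs x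
    obtain ⟨sy, hsyv, hsy⟩ := sign_abs y
    obtain ⟨ss, hssv, hss⟩ := sign_abs (x + y)
    -- the integer polynomial identity
    set Q : Polynomial ℤ :=
      C ss * digP β v n - X ^ K * (C sx * digP β u1 N1 + C sy * digP β u2 N2) with hQdef
    have hQβ : (aeval β Q : ℝ) = 0 := by
      simp only [hQdef, map_sub, map_mul, map_add, aeval_C, map_pow, aeval_X,
        algebraMap_int_eq, eq_intCast, map_intCast]
      rw [hxrep, hyrep, hvrep]
      linear_combination (β ^ K) * hss - (β ^ K) * hsx - (β ^ K) * hsy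
    have hQγ : (aeval γ Q : ℝ) = 0 := conj_eval z a hz ha β γ hroot hγroot Q hQβ
    -- notation for evaluations at γ
    set Axγ : ℝ := (aeval γ (digP β u1 N1) : ℝ) with hAx
    set Ayγ : ℝ := (aeval γ (digP β u2 N2) : ℝ) with hAy
    set Evγ : ℝ := (aeval γ (digP β v n) : ℝ) with hEv
    have hQγ' : (ss:ℝ) * Evγ = γ ^ K * ((sx:ℝ) * Axγ + (sy:ℝ) * Ayγ) := by
      have := hQγ
      simp only [hQdef, map_sub, map_mul, map_add, aeval_C, map_pow, aeval_X,
        algebraMap_int_eq, eq_intCast, map_intCast] at this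
      rw [← hAx, ← hAy, ← hEv] at this
      linarith
    -- digit bounds
    have hd1n : ∀ j, 0 ≤ dig β u1 j := dig_nonneg β hβ0 hu1
    have hd2n : ∀ j, 0 ≤ dig β u2 j := dig_nonneg β hβ0 hu2
    have hdvn : ∀ j, 0 ≤ dig β v j := dig_nonneg β hβ0 hvIco
    have hd1l : ∀ j, dig β u1 j ≤ a := dig_le β hβ0 hβa1 hu1
    have hd2l : ∀ j, dig β u2 j ≤ a := dig_le β hβ0 hβa1 hu2
    -- Evγ ≥ 1 : the last digit is nonzero by minimality of n
    have hn1 : 1 ≤ n := by omega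
    have hlast : 1 ≤ dig β v (n-1) := by
      by_contra hcon
      push_neg at hcon
      have h00 : dig β v (n-1) = 0 := le_antisymm (by omega) (hdvn (n-1))
      have htn : betaT β ((betaT β)^[n-1] v) = 0 := by
        have h2 : (betaT β)^[n-1+1] v = 0 := by
          have e : n-1+1 = n := by omega
          rw [e]; exact hnT
        rwa [Function.iterate_succ_apply'] at h2
      have hfl : (⌊β * (betaT β)^[n-1] v⌋ : ℝ) = 0 := by
        have : dig β v (n-1) = ⌊β * (betaT β)^[n-1] v⌋ := rfl
        rw [← this, h00]
        norm_num
      have hzero : (betaT β)^[n-1] v = 0 := by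
        have hb : β * (betaT β)^[n-1] v - (⌊β * (betaT β)^[n-1] v⌋ : ℝ) = 0 := htn
        rw [hfl] at hb
        have : β * (betaT β)^[n-1] v = 0 := by linarith
        exact (mul_eq_zero.mp this).resolve_left hβne
      exact Nat.find_min hex (show n - 1 < n by omega) hzero
    have hEv1 : (1:ℝ) ≤ Evγ := by
      have h1 := digP_eval_const_le β v hγ0.le hdvn (n-1)
      rw [show n-1+1 = n from by omega] at h1
      have h2 : (1:ℝ) ≤ (dig β v (n-1) : ℝ) := by exact_mod_cast hlast
      rw [hEv]
      linarith
    -- bounds at γ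
    have hAx0 : 0 ≤ Axγ := digP_eval_nonneg β u1 hγ0.le hd1n N1
    have hAy0 : 0 ≤ Ayγ := digP_eval_nonneg β u2 hγ0.le hd2n N2
    have hAxl : (1 - γ) * Axγ ≤ (a:ℝ) := digP_eval_le β u1 hγ0.le hγ1 hd1n hd1l N1
    have hAyl : (1 - γ) * Ayγ ≤ (a:ℝ) := digP_eval_le β u2 hγ0.le hγ1 hd2n hd2l N2
    -- putting it together
    have hsx1 : |(sx:ℝ)| = 1 := by rcases hsxv with h | h <;> rw [h] <;> norm_num
    have hsy1 : |(sy:ℝ)| = 1 := by rcases hsyv with h | h <;> rw [h] <;> norm_num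
    have hss1 : |(ss:ℝ)| = 1 := by rcases hssv with h | h <;> rw [h] <;> norm_num
    have hEvK : Evγ ≤ γ ^ K * (Axγ + Ayγ) := by
      have e1 : Evγ = |(ss:ℝ) * Evγ| := by
        rw [abs_mul, hss1, one_mul, abs_of_nonneg (by linarith : (0:ℝ) ≤ Evγ)]
      rw [e1, hQγ', abs_mul, abs_pow, abs_of_nonneg hγ0.le]
      have e2 : |(sx:ℝ) * Axγ + (sy:ℝ) * Ayγ| ≤ Axγ + Ayγ := by
        calc |(sx:ℝ) * Axγ + (sy:ℝ) * Ayγ| ≤ |(sx:ℝ) * Axγ| + |(sy:ℝ) * Ayγ| := abs_add_le _ _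
        _ = Axγ + Ayγ := by
            rw [abs_mul, abs_mul, hsx1, hsy1, one_mul, one_mul,
              abs_of_nonneg hAx0, abs_of_nonneg hAy0]
      exact mul_le_mul_of_nonneg_left e2 (by positivity)
    have hgK : γ ^ K ≤ γ ^ 2 := pow_le_pow_of_le_one hγ0.le hγ1.le hK2
    have hS0 : 0 ≤ Axγ + Ayγ := by linarith
    have h5 : (1:ℝ) ≤ γ ^ 2 * (Axγ + Ayγ) := by
      have := mul_le_mul_of_nonneg_right hgK hS0
      linarith
    have hsum : (1 - γ) * (Axγ + Ayγ) ≤ 2 * (a:ℝ) := by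
      have e : (1 - γ) * (Axγ + Ayγ) = (1-γ)*Axγ + (1-γ)*Ayγ := by ring
      rw [e]; linarith
    -- final numeric contradiction
    have c1 : (1-γ) * 1 ≤ (1-γ) * (γ^2 * (Axγ + Ayγ)) :=
      mul_le_mul_of_nonneg_left h5 (by linarith)
    have c2 : (1-γ) * (γ^2 * (Axγ + Ayγ)) = γ^2 * ((1-γ) * (Axγ + Ayγ)) := by ring
    have c3 : γ^2 * ((1-γ) * (Axγ + Ayγ)) ≤ γ^2 * (2*(a:ℝ)) :=
      mul_le_mul_of_nonneg_left hsum (by positivity)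
    have c4 : γ^2 * (2*(a:ℝ)) = 2*γ*(γ*(a:ℝ)) := by ring
    have c5 : 2*γ*(γ*(a:ℝ)) ≤ 2*γ*2 :=
      mul_le_mul_of_nonneg_left hγA (by linarith)
    linarith

lemma lo_lemma (z a : ℤ) (hz : 1 ≤ z) (ha : 4*(z+2)^2 ≤ a) (β : ℝ) (hβ : 1 < β)
    (hroot : β ^ 3 - (a : ℝ) * β ^ 2 - ((a : ℝ) - (z : ℝ)) * β + 1 = 0) :
    (a:ℝ)*β ∈ betaInt β ∧ ((a:ℝ)-(z:ℝ)) ∈ betaInt β ∧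
      ((a:ℝ)*β + ((a:ℝ)-(z:ℝ))) ∈ finBeta β ∧
      ((a:ℝ)*β + ((a:ℝ)-(z:ℝ))) ∉ betaInt β := by
  have hβ0 : (0:ℝ) < β := lt_trans one_pos hβ
  have hβne : β ≠ 0 := ne_of_gt hβ0
  have hT0 : betaT β 0 = 0 := by simp [betaT]
  obtain ⟨h36, hza, h32⟩ := int_facts z a hz ha
  have hA : (36:ℝ) ≤ (a:ℝ) := by exact_mod_cast h36
  have hAZ : (1:ℝ) ≤ (a:ℝ) - (z:ℝ) := by
    have h' : ((z:ℝ)) + 1 ≤ (a:ℝ) := by exact_mod_cast hza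
    linarith
  obtain ⟨haβ, hβa1⟩ := beta_loc z a hz ha β hβ hroot
  have hβ36 : (36:ℝ) < β := lt_of_le_of_lt hA haβ
  set V : ℝ := β^2 + 1/β with hVdef
  have hV0 : 0 < V := by positivity
  have hVeq : (a:ℝ)*β + ((a:ℝ)-(z:ℝ)) = V := by
    rw [hVdef]
    field_simp
    linear_combination -hroot
  -- basic T computations
  have t1 : betaT β (1/β) = 0 := by
    unfold betaT
    rw [mul_one_div_cancel hβne, Int.floor_one]
    norm_num
  have hb1 : (1:ℝ)/β < 1 := by rw [div_lt_one hβ0]; exact hβ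
  have hb10 : (0:ℝ) < 1/β := by positivity
  have t2 : betaT β (1/β^2) = 1/β := by
    unfold betaT
    have e : β * (1/β^2) = 1/β := by field_simp
    rw [e, Int.floor_eq_zero_iff.mpr ⟨hb10.le, hb1⟩]
    norm_num
  have hb2 : (1:ℝ)/β^2 < 1 := by rw [div_lt_one (by positivity)]; nlinarith
  have hb20 : (0:ℝ) < 1/β^2 := by positivity
  have t3 : betaT β (1/β^3) = 1/β^2 := by
    unfold betaT
    have e : β * (1/β^3) = 1/β^2 := by field_simp
    rw [e, Int.floor_eq_zero_iff.mpr ⟨hb20.le, hb2⟩]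
    norm_num
  have hb3 : (1:ℝ)/β^3 < 1 := by rw [div_lt_one (by positivity)]; nlinarith
  have hb30 : (0:ℝ) < 1/β^3 := by positivity
  have t4 : betaT β (V/β^3) = 1/β^3 := by
    unfold betaT
    have e : β * (V/β^3) = 1 + 1/β^3 := by rw [hVdef]; field_simp
    have hfl : ⌊(1 + 1/β^3 : ℝ)⌋ = 1 := by
      rw [Int.floor_eq_iff]
      constructor
      · push_cast; linarith
      · push_cast; linarith
    rw [e, hfl]
    push_cast; ring
  have hV3 : V/β^3 = 1/β + 1/β^4 := by rw [hVdef]; field_simp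
  have hV3lt : V/β^3 < 1 := by
    rw [hV3]
    have i1 : (1:ℝ)/β ≤ 1/2 := by
      apply one_div_le_one_div_of_le (by norm_num)
      linarith
    have i2 : (1:ℝ)/β^4 ≤ 1/16 := by
      apply one_div_le_one_div_of_le (by norm_num)
      calc (16:ℝ) = 2^4 := by norm_num
      _ ≤ β^4 := pow_le_pow_left₀ (by norm_num) (by linarith) 4
    linarith
  have hV30 : 0 < V/β^3 := by positivity
  refine ⟨?_, ?_, ?_, ?_⟩
  · -- a*β ∈ betaInt
    refine ⟨2, ?_, ?_⟩
    · have habs : |(a:ℝ)*β|/β^2 = (a:ℝ)/β := by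
        rw [abs_of_pos (by positivity)]
        field_simp
      rw [habs]
      exact ⟨by positivity, by rw [div_lt_one hβ0]; exact haβ⟩
    · have habs : |(a:ℝ)*β|/β^2 = (a:ℝ)/β := by
        rw [abs_of_pos (by positivity)]
        field_simp
      rw [habs]
      have tA : betaT β ((a:ℝ)/β) = 0 := by
        unfold betaT
        have e : β * ((a:ℝ)/β) = (a:ℝ) := by field_simp
        rw [e, Int.floor_intCast]
        ring
      show betaT β (betaT β ((a:ℝ)/β)) = 0
      rw [tA, hT0]
  · -- a - z ∈ betaInt
    refine ⟨1, ?_, ?_⟩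
    · have habs : |(a:ℝ)-(z:ℝ)|/β^1 = ((a:ℝ)-(z:ℝ))/β := by
        rw [abs_of_pos (by linarith)]
        ring
      rw [habs]
      refine ⟨by positivity, ?_⟩
      rw [div_lt_one hβ0]
      have hz0 : (0:ℝ) < (z:ℝ) := by
        have : (1:ℝ) ≤ (z:ℝ) := by exact_mod_cast hz
        linarith
      linarith
    · have habs : |(a:ℝ)-(z:ℝ)|/β^1 = ((a:ℝ)-(z:ℝ))/β := by
        rw [abs_of_pos (by linarith)]
        ring
      rw [habs]
      show betaT β (((a:ℝ)-(z:ℝ))/β) = 0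
      unfold betaT
      have e : β * (((a:ℝ)-(z:ℝ))/β) = ((a - z : ℤ):ℝ) := by push_cast; field_simp
      rw [e, Int.floor_intCast]
      ring
  · -- the sum is in finBeta
    refine ⟨3, 4, ?_, ?_⟩
    · have habs : |(a:ℝ)*β + ((a:ℝ)-(z:ℝ))|/β^3 = V/β^3 := by
        rw [hVeq, abs_of_pos hV0]
      rw [habs]
      exact ⟨hV30.le, hV3lt⟩
    · have habs : |(a:ℝ)*β + ((a:ℝ)-(z:ℝ))|/β^3 = V/β^3 := by
        rw [hVeq, abs_of_pos hV0]
      rw [habs]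
      show betaT β (betaT β (betaT β (betaT β (V/β^3)))) = 0
      rw [t4, t3, t2, t1]
  · -- the sum is not in betaInt
    rintro ⟨N, hIco, hT⟩
    rw [hVeq, abs_of_pos hV0] at hIco hT
    rcases le_or_gt N 2 with hN | hN
    · have hpow : β^N ≤ β^2 := pow_le_pow_right₀ hβ.le hN
      have hmono : V/β^2 ≤ V/β^N :=
        div_le_div_of_nonneg_left hV0.le (by positivity) hpow
      have hV2 : V/β^2 = 1 + 1/β^3 := by rw [hVdef]; field_simp
      rw [hV2] at hmono
      have := hIco.2
      linarith
    · -- N ≥ 3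
      have claim : ∀ k, (betaT β)^[k] (V/β^(3+k)) = V/β^3 := by
        intro k
        induction k with
        | zero => norm_num
        | succ k ih =>
          rw [Function.iterate_succ_apply]
          have harg : betaT β (V/β^(3+(k+1))) = V/β^(3+k) := by
            unfold betaT
            have e : β * (V/β^(3+(k+1))) = V/β^(3+k) := by
              rw [show 3+(k+1) = (3+k)+1 from rfl, pow_succ]
              field_simp
            have hle : V/β^(3+k) ≤ V/β^3 :=
              div_le_div_of_nonneg_left hV0.le (by positivity)
                (pow_le_pow_right₀ hβ.le (by omega))
            have h0' : 0 < V/β^(3+k) := by positivity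
            rw [e, Int.floor_eq_zero_iff.mpr ⟨h0'.le, lt_of_le_of_lt hle hV3lt⟩]
            norm_num
          rw [harg, ih]
      have h1 : (betaT β)^[N-3] (V/β^N) = V/β^3 := by
        have := claim (N-3)
        rw [show 3+(N-3) = N from by omega] at this
        exact this
      have h2 : (betaT β)^[N] (V/β^N) = 1/β := by
        have e : (betaT β)^[N] (V/β^N) = (betaT β)^[3] ((betaT β)^[N-3] (V/β^N)) := by
          rw [← Function.iterate_add_apply, show 3+(N-3) = N from by omega]
        rw [e, h1]
        show betaT β (betaT β (betaT β (V/β^3))) = 1/β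
        rw [t4, t3, t2]
      rw [h2] at hT
      exact absurd hT (by positivity)

theorem stmt10 (z a : ℤ) (hz : 1 ≤ z) (ha : 4 * (z + 2) ^ 2 ≤ a) (β : ℝ)
    (hβ : 1 < β)
    (hroot : β ^ 3 - (a : ℝ) * β ^ 2 - ((a : ℝ) - (z : ℝ)) * β + 1 = 0) :
    Lplus β = 1 := by
  unfold Lplus
  set S : Set ℕ := {L : ℕ | ∀ x ∈ betaInt β, ∀ y ∈ betaInt β,
    x + y ∈ finBeta β → β ^ L * (x + y) ∈ betaInt β} with hS
  have h1 : 1 ∈ S := up_lemma z a hz ha β hβ hroot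
  have h0 : 0 ∉ S := by
    intro h
    obtain ⟨m1, m2, m3, m4⟩ := lo_lemma z a hz ha β hβ hroot
    have h' := h ((a:ℝ)*β) m1 ((a:ℝ)-(z:ℝ)) m2 m3
    rw [pow_zero, one_mul] at h'
    exact m4 h'
  have hmem := Nat.sInf_mem (⟨1, h1⟩ : S.Nonempty)
  have hle : sInf S ≤ 1 := Nat.sInf_le h1
  have hne0 : sInf S ≠ 0 := fun h' => h0 (h' ▸ hmem)
  omega
end
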